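/- arXiv:1610.06005 — 3 statements merged into one kernel-verified Lean document; each statement's English description precedes it below -/
import Mathlib

section
/- Let n ≥ 2, let δ > 0, let P = (P_1, …, P_n) : [u, v] → Δ_n be a rigid n-system of mesh δ on a compact subinterval [u, v] of (0,∞), and let c = (c_1, …, c_n) be a strictly increasing sequence of positive multiples of δ with P_j(v) ≤ c_j for j = 1, …, n. Set w = c_1 + ⋯ + c_n. Then there exist a rigid n-system P̃ = (P̃_1, …, P̃_n) : [u, w] → Δ_n of mesh δ and a surjective map A : [u, w] → [u, v] such that: (i) P̃(q) = P(q) and A(q) = q for each q ∈ [u, v] with P_n(q) < P_n(v); (ii) P̃(w) = c; (iii) 0 ≤ P̃_j(q) − P_j(A(q)) ≤ c_j − P_j(v) for each q ∈ [u, w] and each j = 1, …, n. -/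
open Filter Set Pointwise Topology

noncomputable section

/-- Points of `ℝ^n`. -/
abbrev RVec (n : ℕ) := Fin n → ℝ

/-- The vector of `ℝ^n` with a `1` in position `j` (0-based) and `0` elsewhere;
`eVec n 0` is the first canonical basis vector `e_1`. -/
def eVec (n : ℕ) (j : ℕ) : RVec n := fun i => if (i : ℕ) = j then 1 else 0

/-- `P` is an `n`-system on the subinterval `I` of `[0,∞)`:
`I` is an order-connected subset of `[0,∞)` with nonempty interior, and conditions
(S1), (S2), (S3) hold at every `q ∈ I`. -/
def IsNSystem (n : ℕ) (I : Set ℝ) (P : ℝ → RVec n) : Prop :=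
  I ⊆ Set.Ici (0 : ℝ) ∧ I.OrdConnected ∧ (interior I).Nonempty ∧
  ∀ q ∈ I,
    ((∀ i, 0 ≤ P q i) ∧ Monotone (P q) ∧ (∑ i, P q i) = q) ∧
    ∃ ε > (0 : ℝ), ∃ k ℓ : Fin n,
      (∀ t ∈ I ∩ Set.Icc (q - ε) q, P t = P q + (t - q) • eVec n ℓ) ∧
      (∀ t ∈ I ∩ Set.Icc q (q + ε), P t = P q + (t - q) • eVec n k) ∧
      (q ∈ interior I → ℓ < k → ∀ i : Fin n, ℓ ≤ i → i ≤ k → P q i = P q ℓ)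

/-- `P` is a proper `n`-system on `I`: it is an `n`-system whose first component is
unbounded (by the monotonicity (S1) of the components, this is equivalent to all
components simultaneously exceeding any given bound). -/
def IsProperSys (n : ℕ) (I : Set ℝ) (P : ℝ → RVec n) : Prop :=
  IsNSystem n I P ∧ ∀ M : ℝ, ∃ q ∈ I, ∀ i, M < P q i

/-- The set `F(P)` of limits of `q_i⁻¹ • P(q_i)` along strictly increasing unbounded
sequences `(q_i)` in `I`. -/
def FSet (n : ℕ) (I : Set ℝ) (P : ℝ → RVec n) : Set (RVec n) :=
  {x | ∃ q : ℕ → ℝ, (∀ i, q i ∈ I) ∧ StrictMono q ∧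
    Tendsto q atTop atTop ∧ Tendsto (fun i => (q i)⁻¹ • P (q i)) atTop (𝓝 x)}

/-- The set `F(P, e₁)`: as `F(P)`, but with the extra requirement that the right
derivative of `P` at each `q_i` is the first basis vector `e_1`. -/
def FSetE1 (n : ℕ) (I : Set ℝ) (P : ℝ → RVec n) : Set (RVec n) :=
  {x | ∃ q : ℕ → ℝ, (∀ i, q i ∈ I) ∧ StrictMono q ∧ Tendsto q atTop atTop ∧
    (∀ i, ∃ ε > (0 : ℝ), ∀ t ∈ I ∩ Set.Icc (q i) (q i + ε),
      P t = P (q i) + (t - q i) • eVec n 0) ∧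
    Tendsto (fun i => (q i)⁻¹ • P (q i)) atTop (𝓝 x)}

/-- `q` is a switch number of the `n`-system `P` on `I`: a point of `I` on the boundary
of `I`, or an interior point where the local slopes `e_k` (right) and `e_ℓ` (left)
from (S2) satisfy `k < ℓ`. -/
def IsSwitchNumber (n : ℕ) (I : Set ℝ) (P : ℝ → RVec n) (q : ℝ) : Prop :=
  q ∈ I ∧ (q ∈ frontier I ∨
    (q ∈ interior I ∧ ∃ ε > (0 : ℝ), ∃ k ℓ : Fin n, k < ℓ ∧
      (∀ t ∈ I ∩ Set.Icc (q - ε) q, P t = P q + (t - q) • eVec n ℓ) ∧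
      (∀ t ∈ I ∩ Set.Icc q (q + ε), P t = P q + (t - q) • eVec n k)))

/-- `q` is a division number of the `n`-system `P` on `I`: a point of `I` on the boundary
of `I`, or an interior point where `P` is not differentiable, i.e. where the left and
right slopes from (S2) differ. -/
def IsDivisionNumber (n : ℕ) (I : Set ℝ) (P : ℝ → RVec n) (q : ℝ) : Prop :=
  q ∈ I ∧ (q ∈ frontier I ∨
    (q ∈ interior I ∧ ∃ ε > (0 : ℝ), ∃ k ℓ : Fin n, k ≠ ℓ ∧
      (∀ t ∈ I ∩ Set.Icc (q - ε) q, P t = P q + (t - q) • eVec n ℓ) ∧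
      (∀ t ∈ I ∩ Set.Icc q (q + ε), P t = P q + (t - q) • eVec n k)))

/-- A non-degenerate `n`-system: an `n`-system whose domain is a closed subinterval
of `(0,∞)` and whose switch points all have `n` distinct positive coordinates. -/
def IsNonDegenerate (n : ℕ) (I : Set ℝ) (P : ℝ → RVec n) : Prop :=
  IsNSystem n I P ∧ IsClosed I ∧ I ⊆ Set.Ioi (0 : ℝ) ∧
  ∀ q, IsSwitchNumber n I P q → (∀ i, 0 < P q i) ∧ StrictMono (P q)

/-- A rigid `n`-system of mesh `δ`: a non-degenerate `n`-system whose switch points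
belong to `δℤ^n`. -/
def IsRigid (n : ℕ) (δ : ℝ) (I : Set ℝ) (P : ℝ → RVec n) : Prop :=
  IsNonDegenerate n I P ∧
  ∀ q, IsSwitchNumber n I P q → ∀ i, ∃ m : ℤ, P q i = δ * m

/-- A self-similar system: the domain is unbounded and there is `ρ > 1` with
`P(ρq) = ρ • P(q)` for all `q` in the domain. -/
def IsSelfSimilar (n : ℕ) (I : Set ℝ) (P : ℝ → RVec n) : Prop :=
  ¬ BddAbove I ∧ ∃ ρ : ℝ, 1 < ρ ∧ ∀ q ∈ I, ρ * q ∈ I ∧ P (ρ * q) = ρ • P q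

/-- The cube `[-ε, ε]^n`. -/
def cubeNbhd (n : ℕ) (ε : ℝ) : Set (RVec n) := {y | ∀ i, |y i| ≤ ε}

/-- The distance `dist(E, F)`: the infimum of all `ε > 0` such that
`E ⊆ F + [-ε,ε]^n` and `F ⊆ E + [-ε,ε]^n`. -/
def cubeDist (n : ℕ) (E F : Set (RVec n)) : ℝ :=
  sInf {ε : ℝ | 0 < ε ∧ E ⊆ F + cubeNbhd n ε ∧ F ⊆ E + cubeNbhd n ε}

/-- `μ_T(P)`: the point of `ℝ^m` whose `j`-th coordinate is
`liminf_{q → ∞, q ∈ I} T_j(P(q))/q`. -/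
def muT (n m : ℕ) (T : RVec n → RVec m) (I : Set ℝ) (P : ℝ → RVec n) : RVec m :=
  fun j => Filter.liminf (fun q => T (P q) j / q) (atTop ⊓ 𝓟 I)

/-- `liminf` of a sequence of subsets of `ℝ^n`: the set of limits of convergent
sequences `(x_i)` with `x_i ∈ F i` for every `i`. -/
def setLiminf (n : ℕ) (F : ℕ → Set (RVec n)) : Set (RVec n) :=
  {x | ∃ y : ℕ → RVec n, (∀ i, y i ∈ F i) ∧ Tendsto y atTop (𝓝 x)}

/-- `limsup` of a sequence of subsets of `ℝ^n`: the set of accumulation points of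
sequences `(x_i)` with `x_i ∈ F i` for every `i`, i.e. limits of convergent
subsequences. -/
def setLimsup (n : ℕ) (F : ℕ → Set (RVec n)) : Set (RVec n) :=
  {x | ∃ (y : ℕ → RVec n) (φ : ℕ → ℕ), (∀ i, y i ∈ F i) ∧ StrictMono φ ∧
    Tendsto (y ∘ φ) atTop (𝓝 x)}

/-! ### Auxiliary material for `extend_rigid_system` -/

section ExtendAux

open Set

/-- A locally nondecreasing function on `[a,b]` is nondecreasing. -/
private lemma monotoneOn_of_local {a b : ℝ} {f : ℝ → ℝ}
    (h : ∀ q ∈ Icc a b, ∃ ε > (0:ℝ),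
      (∀ t ∈ Icc a b ∩ Icc (q - ε) q, f t ≤ f q) ∧
      (∀ t ∈ Icc a b ∩ Icc q (q + ε), f q ≤ f t)) :
    MonotoneOn f (Icc a b) := by
  intro x hx y hy hxy
  rcases eq_or_lt_of_le hxy with rfl | hxy
  · exact le_rfl
  have hsub : Icc x y ⊆ Icc a b := Icc_subset_Icc hx.1 hy.2
  set S : Set ℝ := {t | t ∈ Icc x y ∧ f x ≤ f t} with hS
  have hxS : x ∈ S := ⟨⟨le_rfl, le_of_lt hxy⟩, le_rfl⟩
  have hSne : S.Nonempty := ⟨x, hxS⟩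
  have hSbdd : BddAbove S := ⟨y, fun t ht => ht.1.2⟩
  set T := sSup S with hT
  have hxT : x ≤ T := le_csSup hSbdd hxS
  have hTy : T ≤ y := csSup_le hSne (fun t ht => ht.1.2)
  have hTab : T ∈ Icc a b := hsub ⟨hxT, hTy⟩
  obtain ⟨ε, hε, hL, hR⟩ := h T hTab
  have hfT : f x ≤ f T := by
    obtain ⟨t, htS, htT⟩ := exists_lt_of_lt_csSup hSne (show T - ε < T by linarith)
    have ht_le : t ≤ T := le_csSup hSbdd htS
    have : f t ≤ f T := hL t ⟨hsub htS.1, le_of_lt htT, ht_le⟩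
    exact le_trans htS.2 this
  rcases eq_or_lt_of_le hTy with hTeq | hTlt
  · rw [← hTeq]; exact hfT
  · exfalso
    set s := min y (T + ε) with hs
    have hsT : T < s := lt_min hTlt (by linarith)
    have hs_mem : s ∈ Icc x y := ⟨le_trans hxT (le_of_lt hsT), min_le_left _ _⟩
    have : f T ≤ f s := hR s ⟨hsub hs_mem, le_of_lt hsT, min_le_right _ _⟩
    have hsS : s ∈ S := ⟨hs_mem, le_trans hfT this⟩
    exact absurd (le_csSup hSbdd hsS) (not_le.mpr hsT)

/-- Uniqueness of the right slope. -/
private lemma slope_unique_right {n : ℕ} {α β q ε₁ ε₂ : ℝ} {f : ℝ → RVec n} {k₁ k₂ : Fin n}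
    (hq : q ∈ Icc α β) (hqβ : q < β) (hε₁ : 0 < ε₁) (hε₂ : 0 < ε₂)
    (h₁ : ∀ t ∈ Icc α β ∩ Icc q (q + ε₁), f t = f q + (t - q) • eVec n k₁)
    (h₂ : ∀ t ∈ Icc α β ∩ Icc q (q + ε₂), f t = f q + (t - q) • eVec n k₂) : k₁ = k₂ := by
  set t := min β (q + min ε₁ ε₂) with ht
  have hqt : q < t := lt_min hqβ (by have := lt_min hε₁ hε₂; linarith)
  have htm : t ∈ Icc α β := ⟨le_trans hq.1 (le_of_lt hqt), min_le_left _ _⟩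
  have h1 : f t = f q + (t - q) • eVec n k₁ :=
    h₁ t ⟨htm, le_of_lt hqt, le_trans (min_le_right _ _) (by have := min_le_left ε₁ ε₂; linarith)⟩
  have h2 : f t = f q + (t - q) • eVec n k₂ :=
    h₂ t ⟨htm, le_of_lt hqt, le_trans (min_le_right _ _) (by have := min_le_right ε₁ ε₂; linarith)⟩
  have hne : (t - q : ℝ) ≠ 0 := by intro h; rw [sub_eq_zero] at h; exact absurd h.symm (ne_of_lt hqt)
  have := congrFun (h1.symm.trans h2) k₁
  simp only [Pi.add_apply, Pi.smul_apply, eVec, smul_eq_mul, if_pos rfl] at this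
  by_contra hk
  rw [if_neg (fun hh => hk (Fin.ext hh))] at this
  simp at this
  exact hne this

/-- Uniqueness of the left slope. -/
private lemma slope_unique_left {n : ℕ} {α β q ε₁ ε₂ : ℝ} {f : ℝ → RVec n} {k₁ k₂ : Fin n}
    (hq : q ∈ Icc α β) (hqα : α < q) (hε₁ : 0 < ε₁) (hε₂ : 0 < ε₂)
    (h₁ : ∀ t ∈ Icc α β ∩ Icc (q - ε₁) q, f t = f q + (t - q) • eVec n k₁)
    (h₂ : ∀ t ∈ Icc α β ∩ Icc (q - ε₂) q, f t = f q + (t - q) • eVec n k₂) : k₁ = k₂ := by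
  set t := max α (q - min ε₁ ε₂) with ht
  have hqt : t < q := max_lt hqα (by have := lt_min hε₁ hε₂; linarith)
  have htm : t ∈ Icc α β := ⟨le_max_left _ _, le_trans (le_of_lt hqt) hq.2⟩
  have htl1 : q - ε₁ ≤ t := le_trans (by have := min_le_left ε₁ ε₂; linarith) (le_max_right α _)
  have htl2 : q - ε₂ ≤ t := le_trans (by have := min_le_right ε₁ ε₂; linarith) (le_max_right α _)
  have h1 : f t = f q + (t - q) • eVec n k₁ := h₁ t ⟨htm, htl1, le_of_lt hqt⟩
  have h2 : f t = f q + (t - q) • eVec n k₂ := h₂ t ⟨htm, htl2, le_of_lt hqt⟩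
  have hne : (t - q : ℝ) ≠ 0 := by intro h; rw [sub_eq_zero] at h; exact absurd h (ne_of_lt hqt)
  have := congrFun (h1.symm.trans h2) k₁
  simp only [Pi.add_apply, Pi.smul_apply, eVec, smul_eq_mul, if_pos rfl] at this
  by_contra hk
  rw [if_neg (fun hh => hk (Fin.ext hh))] at this
  simp at this
  exact hne this


namespace ExtendRigid

variable {n : ℕ}

/-- Coordinate evaluation of a slope formula. -/
private lemma apply_slope {f g : RVec n} {s : ℝ} {k : Fin n}
    (h : f = g + s • eVec n ↑k) (j : Fin n) : f j = g j + (if j = k then s else 0) := by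
  have H := congrFun h j
  simp only [Pi.add_apply, Pi.smul_apply, smul_eq_mul, eVec] at H
  rcases eq_or_ne j k with rfl | hne
  · simpa using H
  · rw [if_neg hne]
    rw [if_neg (fun hh => hne (Fin.ext hh))] at H
    simpa using H

noncomputable def sig (u v : ℝ) (P : ℝ → RVec n) (j : Fin n) : ℝ :=
  sInf {t | t ∈ Set.Icc u v ∧ P t j = P v j}

noncomputable def rho (u v : ℝ) (P : ℝ → RVec n) [NeZero n] (i : Fin n) : ℝ :=
  (Finset.Ici i).sup' ⟨i, Finset.mem_Ici.mpr le_rfl⟩ (sig u v P)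

def DD (v : ℝ) (P : ℝ → RVec n) (c : Fin n → ℝ) (j : Fin n) : ℝ := c j - P v j

noncomputable def SS (v : ℝ) (P : ℝ → RVec n) (c : Fin n → ℝ) (i : Fin n) : ℝ :=
  ∑ j ∈ Finset.Ioi i, DD v P c j

noncomputable def aa (u v : ℝ) (P : ℝ → RVec n) (c : Fin n → ℝ) [NeZero n] (i : Fin n) : ℝ :=
  rho u v P i + SS v P c i

noncomputable def bb (u v : ℝ) (P : ℝ → RVec n) (c : Fin n → ℝ) [NeZero n] (i : Fin n) : ℝ :=
  aa u v P c i + DD v P c i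

noncomputable def AA (u v : ℝ) (P : ℝ → RVec n) (c : Fin n → ℝ) [NeZero n] (q : ℝ) : ℝ :=
  Finset.univ.sup' ⟨⟨0, Nat.pos_of_ne_zero (NeZero.ne n)⟩, Finset.mem_univ _⟩
    fun i => min (q - SS v P c i) (rho u v P i)

noncomputable def cl (u v : ℝ) (P : ℝ → RVec n) (c : Fin n → ℝ) [NeZero n] (q : ℝ) (j : Fin n) : ℝ :=
  min q (bb u v P c j) - min q (aa u v P c j)

noncomputable def Ptt (u v : ℝ) (P : ℝ → RVec n) (c : Fin n → ℝ) [NeZero n] (q : ℝ) : RVec n :=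
  fun j => P (AA u v P c q) j + cl u v P c q j

section Facts

variable [NeZero n] {δ u v : ℝ} {P : ℝ → RVec n} {c : Fin n → ℝ}

lemma PS1 (hP : IsNSystem n (Set.Icc u v) P) :
    ∀ q ∈ Set.Icc u v, (∀ i, 0 ≤ P q i) ∧ Monotone (P q) ∧ (∑ i, P q i) = q :=
  fun q hq => (hP.2.2.2 q hq).1

lemma PS2 (hP : IsNSystem n (Set.Icc u v) P) :
    ∀ q ∈ Set.Icc u v, ∃ ε > (0:ℝ), ∃ k ℓ : Fin n,
      (∀ t ∈ Set.Icc u v ∩ Set.Icc (q - ε) q, P t = P q + (t - q) • eVec n ℓ) ∧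
      (∀ t ∈ Set.Icc u v ∩ Set.Icc q (q + ε), P t = P q + (t - q) • eVec n k) ∧
      (q ∈ interior (Set.Icc u v) → ℓ < k → ∀ i : Fin n, ℓ ≤ i → i ≤ k → P q i = P q ℓ) :=
  fun q hq => (hP.2.2.2 q hq).2

lemma Pmono (hP : IsNSystem n (Set.Icc u v) P) (j : Fin n) :
    MonotoneOn (fun t => P t j) (Set.Icc u v) := by
  apply monotoneOn_of_local
  intro q hq
  obtain ⟨ε, hε, k, ℓ, hL, hR, _⟩ := PS2 hP q hq
  refine ⟨ε, hε, fun t ht => ?_, fun t ht => ?_⟩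
  · have hs := apply_slope (hL t ht) j
    show P t j ≤ P q j
    split_ifs at hs with h
    · have h2 := ht.2.2
      linarith
    · linarith
  · have hs := apply_slope (hR t ht) j
    show P q j ≤ P t j
    split_ifs at hs with h
    · have h2 := ht.2.1
      linarith
    · linarith

lemma sig_facts (hP : IsNSystem n (Set.Icc u v) P) (huv : u < v) (j : Fin n) :
    sig u v P j ∈ Set.Icc u v ∧ P (sig u v P j) j = P v j ∧
    (∀ t ∈ Set.Icc u v, sig u v P j ≤ t → P t j = P v j) ∧
    (∀ t ∈ Set.Icc u v, t < sig u v P j → P t j < P v j) := by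
  set S : Set ℝ := {t | t ∈ Set.Icc u v ∧ P t j = P v j} with hSdef
  have hvS : v ∈ S := ⟨⟨le_of_lt huv, le_rfl⟩, rfl⟩
  have hSne : S.Nonempty := ⟨v, hvS⟩
  have hSbdd : BddBelow S := ⟨u, fun t ht => ht.1.1⟩
  have hσu : u ≤ sig u v P j := le_csInf hSne (fun t ht => ht.1.1)
  have hσv : sig u v P j ≤ v := csInf_le hSbdd hvS
  have hσm : sig u v P j ∈ Set.Icc u v := ⟨hσu, hσv⟩
  have hup : ∀ s ∈ S, ∀ t ∈ Set.Icc u v, s ≤ t → t ∈ S := by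
    intro s hs t ht hst
    refine ⟨ht, le_antisymm (Pmono hP j ht ⟨le_of_lt huv, le_rfl⟩ ht.2) ?_⟩
    rw [← hs.2]
    exact Pmono hP j hs.1 ht hst
  have hopen : ∀ t ∈ Set.Icc u v, sig u v P j < t → t ∈ S := by
    intro t ht hlt
    obtain ⟨s, hsS, hst⟩ := exists_lt_of_csInf_lt hSne hlt
    exact hup s hsS t ht (le_of_lt hst)
  have hmem : sig u v P j ∈ S := by
    rcases eq_or_lt_of_le hσv with heq | hlt
    · rw [heq]; exact hvS
    · obtain ⟨ε, hε, k, ℓ, hL, hR, _⟩ := PS2 hP _ hσm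
      obtain ⟨σ, hσdef⟩ : ∃ x, x = sig u v P j := ⟨_, rfl⟩
      rw [← hσdef] at hσu hσv hσm hopen hlt hL hR ⊢
      obtain ⟨t1, ht1⟩ : ∃ x, x = σ + min ε (v - σ) / 2 := ⟨_, rfl⟩
      obtain ⟨t2, ht2⟩ : ∃ x, x = σ + min ε (v - σ) := ⟨_, rfl⟩
      have hm : 0 < min ε (v - σ) := lt_min hε (by linarith)
      have h1m : t1 ∈ Set.Icc u v ∩ Set.Icc σ (σ + ε) := by
        constructor
        · constructor
          · linarith
          · have := min_le_right ε (v - σ); linarith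
        · constructor
          · linarith
          · have := min_le_left ε (v - σ); linarith
      have h2m : t2 ∈ Set.Icc u v ∩ Set.Icc σ (σ + ε) := by
        constructor
        · constructor
          · linarith
          · have := min_le_right ε (v - σ); linarith
        · constructor
          · linarith
          · have := min_le_left ε (v - σ); linarith
      have h1S : t1 ∈ S := hopen t1 h1m.1 (by linarith)
      have h2S : t2 ∈ S := hopen t2 h2m.1 (by linarith)
      have e1 := apply_slope (hR t1 h1m) j
      have e2 := apply_slope (hR t2 h2m) j
      rw [h1S.2] at e1
      rw [h2S.2] at e2
      split_ifs at e1 e2 with h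
      · exfalso
        have : t1 - σ = t2 - σ := by linarith
        have : t1 = t2 := by linarith
        rw [ht1, ht2] at this
        have := hm
        linarith
      · exact ⟨hσm, by linarith⟩
  refine ⟨hσm, hmem.2, ?_, ?_⟩
  · intro t ht hle
    rcases eq_or_lt_of_le hle with heq | hlt
    · rw [← heq]; exact hmem.2
    · exact (hopen t ht hlt).2
  · intro t ht hlt
    have hne : t ∉ S := notMem_of_lt_csInf hlt hSbdd
    have : P t j ≤ P v j := Pmono hP j ht ⟨le_of_lt huv, le_rfl⟩ ht.2
    rcases eq_or_lt_of_le this with heq | h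
    · exact absurd ⟨ht, heq⟩ hne
    · exact h

lemma rho_anti {i i' : Fin n} (h : i ≤ i') : rho u v P i' ≤ rho u v P i := by
  apply Finset.sup'_le
  intro j hj
  exact Finset.le_sup' _ (Finset.mem_Ici.mpr (le_trans h (Finset.mem_Ici.mp hj)))

lemma sig_le_rho {i j : Fin n} (h : i ≤ j) : sig u v P j ≤ rho u v P i :=
  Finset.le_sup' _ (Finset.mem_Ici.mpr h)

lemma rho_exists (i : Fin n) : ∃ m : Fin n, i ≤ m ∧ rho u v P i = sig u v P m := by
  obtain ⟨m, hm, hmeq⟩ := Finset.exists_mem_eq_sup' ⟨i, Finset.mem_Ici.mpr le_rfl⟩ (sig u v P)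
  exact ⟨m, Finset.mem_Ici.mp hm, hmeq⟩

lemma rho_mem (hP : IsNSystem n (Set.Icc u v) P) (huv : u < v) (i : Fin n) :
    rho u v P i ∈ Set.Icc u v := by
  obtain ⟨m, _, hmeq⟩ := rho_exists (u := u) (v := v) (P := P) i
  rw [hmeq]
  exact (sig_facts hP huv m).1

lemma rho_const (hP : IsNSystem n (Set.Icc u v) P) (huv : u < v) {i j : Fin n} (hij : i ≤ j)
    {t : ℝ} (ht : t ∈ Set.Icc u v) (hrt : rho u v P i ≤ t) : P t j = P v j :=
  (sig_facts hP huv j).2.2.1 t ht (le_trans (sig_le_rho hij) hrt)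

lemma rho_zero (hP : IsNSystem n (Set.Icc u v) P) (huv : u < v) : rho u v P 0 = v := by
  rcases eq_or_lt_of_le (rho_mem hP huv (0 : Fin n)).2 with heq | hlt
  · exact heq
  · exfalso
    have hM : rho u v P 0 ∈ Set.Icc u v := rho_mem hP huv 0
    have : ∀ j : Fin n, P (rho u v P 0) j = P v j := by
      intro j
      exact rho_const hP huv (by simp [Fin.le_def] : (0:Fin n) ≤ j) hM le_rfl
    have hsum1 := (PS1 hP _ hM).2.2
    have hsum2 := (PS1 hP v ⟨le_of_lt huv, le_rfl⟩).2.2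
    rw [Finset.sum_congr rfl (fun j _ => this j)] at hsum1
    rw [hsum1] at hsum2
    linarith

lemma rho_switch (hP : IsNSystem n (Set.Icc u v) P) (huv : u < v) (i : Fin n) :
    IsSwitchNumber n (Set.Icc u v) P (rho u v P i) := by
  obtain ⟨m, him, hmeq⟩ := rho_exists (u := u) (v := v) (P := P) i
  set q := rho u v P i with hq
  have hqm : q ∈ Set.Icc u v := rho_mem hP huv i
  have hfr : frontier (Set.Icc u v) = {u, v} := by
    rw [frontier_Icc (le_of_lt huv)]
  rcases eq_or_lt_of_le hqm.1 with hqu | hqu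
  · exact ⟨hqm, Or.inl (by rw [hfr]; exact Or.inl hqu.symm)⟩
  rcases eq_or_lt_of_le hqm.2 with hqv | hqv
  · exact ⟨hqm, Or.inl (by rw [hfr]; exact Or.inr hqv)⟩
  have hint : q ∈ interior (Set.Icc u v) := by rw [interior_Icc]; exact ⟨hqu, hqv⟩
  obtain ⟨ε, hε, k, ℓ, hL, hR, _⟩ := PS2 hP q hqm
  have hsf := sig_facts hP huv m
  have hPqm : P q m = P v m := by rw [hmeq]; exact hsf.2.1
  -- left slope is m
  have hℓ : ℓ = m := by
    by_contra hne
    set t := max u (q - ε) with htdef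
    have htq : t < q := max_lt hqu (by linarith)
    have htm : t ∈ Set.Icc u v ∩ Set.Icc (q - ε) q :=
      ⟨⟨le_max_left _ _, le_trans (le_of_lt htq) hqm.2⟩, le_max_right _ _, le_of_lt htq⟩
    have := apply_slope (hL t htm) m
    rw [if_neg (fun hh => hne hh.symm)] at this
    have hlt : P t m < P v m := hsf.2.2.2 t htm.1 (by rw [← hmeq]; exact htq)
    rw [this, hPqm] at hlt
    simp at hlt
  have hkm : k ≠ m := by
    intro hkm
    set t := min v (q + ε) with htdef
    have htq : q < t := lt_min hqv (by linarith)
    have htm : t ∈ Set.Icc u v ∩ Set.Icc q (q + ε) :=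
      ⟨⟨le_trans hqm.1 (le_of_lt htq), min_le_left _ _⟩, le_of_lt htq, min_le_right _ _⟩
    have := apply_slope (hR t htm) m
    rw [if_pos (by rw [hkm])] at this
    have : P t m = P v m + (t - q) := by rw [this, hPqm]
    have hle : P t m ≤ P v m := Pmono hP m htm.1 ⟨le_of_lt huv, le_rfl⟩ htm.1.2
    linarith
  have hkm2 : ¬ (m < k) := by
    intro hmk
    set t := min v (q + ε) with htdef
    have htq : q < t := lt_min hqv (by linarith)
    have htm : t ∈ Set.Icc u v ∩ Set.Icc q (q + ε) :=
      ⟨⟨le_trans hqm.1 (le_of_lt htq), min_le_left _ _⟩, le_of_lt htq, min_le_right _ _⟩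
    have hsk : sig u v P k ≤ q := by
      rw [hq]
      exact sig_le_rho (le_trans him (le_of_lt hmk))
    have h1 : P q k = P v k := (sig_facts hP huv k).2.2.1 q hqm hsk
    have h2 : P t k = P v k := (sig_facts hP huv k).2.2.1 t htm.1 (le_trans hsk (le_of_lt htq))
    have := apply_slope (hR t htm) k
    rw [if_pos rfl] at this
    rw [h1, h2] at this
    linarith
  have hkm3 : k < m := by
    rcases lt_trichotomy k m with h | h | h
    · exact h
    · exact absurd h hkm
    · exact absurd h hkm2
  refine ⟨hqm, Or.inr ⟨hint, ε, hε, k, ℓ, ?_, hL, hR⟩⟩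
  rw [hℓ]
  exact hkm3

lemma u_switch (huv : u < v) : IsSwitchNumber n (Set.Icc u v) P u :=
  ⟨⟨le_rfl, le_of_lt huv⟩, Or.inl (by rw [frontier_Icc (le_of_lt huv)]; exact Or.inl rfl)⟩

lemma v_switch (huv : u < v) : IsSwitchNumber n (Set.Icc u v) P v :=
  ⟨⟨le_of_lt huv, le_rfl⟩, Or.inl (by rw [frontier_Icc (le_of_lt huv)]; exact Or.inr rfl)⟩

set_option linter.unusedSectionVars false

lemma DD_nonneg (hPc : ∀ j, P v j ≤ c j) (j : Fin n) : 0 ≤ DD v P c j :=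
  sub_nonneg.mpr (hPc j)

lemma SS_nonneg (hPc : ∀ j, P v j ≤ c j) (i : Fin n) : 0 ≤ SS v P c i :=
  Finset.sum_nonneg fun j _ => DD_nonneg hPc j

lemma SS_anti (hPc : ∀ j, P v j ≤ c j) {i i' : Fin n} (h : i ≤ i') :
    SS v P c i' ≤ SS v P c i := by
  apply Finset.sum_le_sum_of_subset_of_nonneg
  · intro j hj
    rw [Finset.mem_Ioi] at *
    exact lt_of_le_of_lt h hj
  · exact fun j _ _ => DD_nonneg hPc j

lemma Ioi_eq_Ici_succ (i : Fin n) (h : i.1 + 1 < n) :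
    Finset.Ioi i = Finset.Ici (⟨i.1 + 1, h⟩ : Fin n) := by
  ext j
  simp only [Finset.mem_Ioi, Finset.mem_Ici, Fin.lt_def, Fin.le_def]
  omega

lemma SS_last (i : Fin n) (h : i.1 + 1 = n) : SS v P c i = 0 := by
  rw [SS]
  convert Finset.sum_empty
  ext j
  have hj := j.2
  simp only [Finset.mem_Ioi, Fin.lt_def, Finset.notMem_empty, iff_false]
  omega

lemma bb_eq (i : Fin n) : bb u v P c i = rho u v P i + ∑ j ∈ Finset.Ici i, DD v P c j := by
  rw [bb, aa, SS, ← Finset.Ioi_insert, Finset.sum_insert (Finset.notMem_Ioi_self)]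
  ring

lemma Ici_sum_le (hPc : ∀ j, P v j ≤ c j) {i' i : Fin n} (h : i' < i) :
    ∑ j ∈ Finset.Ici i, DD v P c j ≤ SS v P c i' := by
  apply Finset.sum_le_sum_of_subset_of_nonneg
  · intro j hj
    rw [Finset.mem_Ici] at hj
    rw [Finset.mem_Ioi]
    exact lt_of_lt_of_le h hj
  · exact fun j _ _ => DD_nonneg hPc j

lemma bb_le_aa (hPc : ∀ j, P v j ≤ c j) {i j : Fin n} (h : i < j) :
    bb u v P c j ≤ aa u v P c i := by
  rw [bb_eq, aa]
  have h1 := rho_anti (u := u) (v := v) (P := P) (le_of_lt h)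
  have h2 := Ici_sum_le hPc h
  linarith

lemma aa_le_bb (hPc : ∀ j, P v j ≤ c j) (i : Fin n) : aa u v P c i ≤ bb u v P c i := by
  rw [bb]
  linarith [DD_nonneg hPc i]

lemma aa_anti (hPc : ∀ j, P v j ≤ c j) {i j : Fin n} (h : j ≤ i) :
    aa u v P c i ≤ aa u v P c j := by
  rw [aa, aa]
  have h1 := rho_anti (u := u) (v := v) (P := P) h
  have h2 := SS_anti hPc h
  linarith

lemma bb_anti (hPc : ∀ j, P v j ≤ c j) {i j : Fin n} (h : j ≤ i) :
    bb u v P c i ≤ bb u v P c j := by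
  rcases eq_or_lt_of_le h with rfl | h
  · exact le_rfl
  · exact le_trans (bb_le_aa hPc h) (aa_le_bb hPc j)

lemma u_le_aa (hP : IsNSystem n (Set.Icc u v) P) (huv : u < v) (hPc : ∀ j, P v j ≤ c j)
    (i : Fin n) : u ≤ aa u v P c i := by
  rw [aa]
  have h1 := (rho_mem hP huv i).1
  have h2 := SS_nonneg hPc i
  linarith

lemma Ici_zero : (Finset.Ici (0 : Fin n)) = Finset.univ := by
  apply Finset.eq_univ_iff_forall.mpr
  intro j
  rw [Finset.mem_Ici]
  simp [Fin.le_def]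

lemma bb_zero (hP : IsNSystem n (Set.Icc u v) P) (huv : u < v) :
    bb u v P c 0 = ∑ j, c j := by
  rw [bb_eq, rho_zero hP huv, Ici_zero]
  have hsum := (PS1 hP v ⟨le_of_lt huv, le_rfl⟩).2.2
  have : ∑ j, DD v P c j = ∑ j, c j - ∑ j, P v j := by
    rw [← Finset.sum_sub_distrib]; rfl
  rw [this, hsum]
  ring

lemma v_le_w (hP : IsNSystem n (Set.Icc u v) P) (huv : u < v) (hPc : ∀ j, P v j ≤ c j) :
    v ≤ ∑ j, c j := by
  have h := bb_zero (c := c) hP huv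
  have h2 : u ≤ aa u v P c 0 := u_le_aa hP huv hPc 0
  have h3 : aa u v P c 0 ≤ bb u v P c 0 := aa_le_bb hPc 0
  have h4 : rho u v P 0 = v := rho_zero hP huv
  have h5 := SS_nonneg hPc (0 : Fin n)
  rw [← h]
  rw [bb, aa, h4]
  have h6 := DD_nonneg hPc (0 : Fin n)
  linarith

lemma AA_le_min (q : ℝ) (i : Fin n) : min (q - SS v P c i) (rho u v P i) ≤ AA u v P c q := by
  rw [AA]
  exact Finset.le_sup' (fun i => min (q - SS v P c i) (rho u v P i)) (Finset.mem_univ i)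

lemma AA_sup_le {q M : ℝ} (h : ∀ i, min (q - SS v P c i) (rho u v P i) ≤ M) :
    AA u v P c q ≤ M := by
  rw [AA]
  exact Finset.sup'_le _ _ fun i _ => h i

lemma AA_ride (hP : IsNSystem n (Set.Icc u v) P) (huv : u < v) (hPc : ∀ j, P v j ≤ c j)
    {i : Fin n} {q : ℝ} (h1 : aa u v P c i ≤ q) (h2 : q ≤ bb u v P c i) :
    AA u v P c q = rho u v P i := by
  apply le_antisymm
  · apply AA_sup_le
    intro i'
    rcases le_or_gt i i' with hii | hii
    · exact le_trans (min_le_right _ _) (rho_anti hii)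
    · apply le_trans (min_le_left _ _)
      have hb := bb_eq (u := u) (v := v) (P := P) (c := c) i
      have hs := Ici_sum_le hPc hii
      have := SS_anti hPc (le_of_lt hii)
      linarith
  · have hge : rho u v P i ≤ q - SS v P c i := by rw [aa] at h1; linarith
    rw [← min_eq_right hge]
    exact AA_le_min q i

lemma AA_replay (hP : IsNSystem n (Set.Icc u v) P) (huv : u < v) (hPc : ∀ j, P v j ≤ c j)
    {i : Fin n} {q : ℝ} (hb : ∀ j, i < j → bb u v P c j ≤ q) (ha : q ≤ aa u v P c i) :
    AA u v P c q = q - SS v P c i := by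
  apply le_antisymm
  · apply AA_sup_le
    intro i'
    rcases lt_trichotomy i i' with hii | hii | hii
    · apply le_trans (min_le_right _ _)
      have hsucc : i.1 + 1 < n := by have := i'.2; have := hii; rw [Fin.lt_def] at this; omega
      set j₀ : Fin n := ⟨i.1 + 1, hsucc⟩ with hj₀
      have hj₀le : j₀ ≤ i' := by rw [Fin.le_def]; rw [Fin.lt_def] at hii; simp [hj₀]; omega
      have h1 : rho u v P i' ≤ rho u v P j₀ := rho_anti hj₀le
      have h2 : bb u v P c j₀ ≤ q := hb j₀ (by rw [Fin.lt_def]; simp [hj₀])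
      have h3 : bb u v P c j₀ = rho u v P j₀ + SS v P c i := by
        rw [bb_eq]
        congr 1
        rw [SS, Ioi_eq_Ici_succ i hsucc]
      linarith
    · subst hii; exact min_le_left _ _
    · apply le_trans (min_le_left _ _)
      have := SS_anti hPc (le_of_lt hii)
      linarith
  · have hle : q - SS v P c i ≤ rho u v P i := by rw [aa] at ha; linarith
    rw [← min_eq_left hle]
    exact AA_le_min q i

lemma AA_mapsto (hP : IsNSystem n (Set.Icc u v) P) (huv : u < v) (hPc : ∀ j, P v j ≤ c j)
    {q : ℝ} (hq : u ≤ q) : AA u v P c q ∈ Set.Icc u v := by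
  constructor
  · have hl : n - 1 + 1 = n := by have := Nat.pos_of_ne_zero (NeZero.ne n); omega
    set ilast : Fin n := ⟨n - 1, by omega⟩ with hilast
    have h0 : SS v P c ilast = 0 := SS_last ilast (by simp [hilast]; omega)
    refine le_trans ?_ (AA_le_min (u := u) q ilast)
    rw [h0]
    apply le_min (by linarith) (rho_mem hP huv ilast).1
  · apply AA_sup_le
    intro i
    exact le_trans (min_le_right _ _) (rho_mem hP huv i).2

lemma AA_rho_le (hP : IsNSystem n (Set.Icc u v) P) (huv : u < v) (hPc : ∀ j, P v j ≤ c j)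
    {i : Fin n} {q : ℝ} (h : aa u v P c i ≤ q) : rho u v P i ≤ AA u v P c q := by
  have hge : rho u v P i ≤ q - SS v P c i := by rw [aa] at h; linarith
  refine le_trans ?_ (AA_le_min q i)
  rw [min_eq_right hge]

lemma cl_nonneg (hPc : ∀ j, P v j ≤ c j) (q : ℝ) (j : Fin n) : 0 ≤ cl u v P c q j := by
  rw [cl]
  have := aa_le_bb (u := u) hPc j
  have := min_le_min (le_refl q) this
  linarith

lemma cl_le_DD (hPc : ∀ j, P v j ≤ c j) (q : ℝ) (j : Fin n) :
    cl u v P c q j ≤ DD v P c j := by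
  rw [cl, DD]
  rcases le_total q (aa u v P c j) with h | h
  · rw [min_eq_left h, min_eq_left (le_trans h (aa_le_bb hPc j))]
    have := DD_nonneg hPc j
    rw [DD] at this
    linarith
  · rw [min_eq_right h]
    have h1 : min q (bb u v P c j) ≤ bb u v P c j := min_le_right _ _
    rw [bb, aa, DD] at *
    linarith

lemma cl_replay (hPc : ∀ j, P v j ≤ c j) {i : Fin n} {q : ℝ}
    (hb : ∀ j, i < j → bb u v P c j ≤ q) (ha : q ≤ aa u v P c i) (j : Fin n) :
    cl u v P c q j = if i < j then DD v P c j else 0 := by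
  rw [cl]
  split_ifs with h
  · have h1 : bb u v P c j ≤ q := hb j h
    have h2 : aa u v P c j ≤ q := le_trans (aa_le_bb hPc j) h1
    rw [min_eq_right h1, min_eq_right h2, bb]
    ring
  · push_neg at h
    have h1 : q ≤ aa u v P c j := le_trans ha (aa_anti hPc h)
    have h2 : q ≤ bb u v P c j := le_trans h1 (aa_le_bb hPc j)
    rw [min_eq_left h1, min_eq_left h2]
    ring

lemma cl_ride (hPc : ∀ j, P v j ≤ c j) {i : Fin n} {q : ℝ}
    (h1 : aa u v P c i ≤ q) (h2 : q ≤ bb u v P c i) (j : Fin n) :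
    cl u v P c q j = if j = i then q - aa u v P c i
      else if i < j then DD v P c j else 0 := by
  rw [cl]
  split_ifs with h h'
  · subst h
    rw [min_eq_left h2, min_eq_right h1]
  · have hb : bb u v P c j ≤ q := le_trans (bb_le_aa hPc h') h1
    have hab : aa u v P c j ≤ q := le_trans (aa_le_bb hPc j) hb
    rw [min_eq_right hb, min_eq_right hab, bb]
    ring
  · have hj : j < i := by
      rcases lt_trichotomy j i with hh | hh | hh
      · exact hh
      · exact absurd hh h
      · exact absurd hh h'
    have ha : q ≤ aa u v P c j := le_trans h2 (bb_le_aa hPc hj)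
    have hb : q ≤ bb u v P c j := le_trans ha (aa_le_bb hPc j)
    rw [min_eq_left ha, min_eq_left hb]
    ring

lemma ite_sum_Ioi (i : Fin n) :
    ∑ j, (if i < j then DD v P c j else 0) = SS v P c i := by
  rw [SS, ← Finset.sum_filter]
  congr 1
  ext j
  simp [Finset.mem_Ioi]

lemma Ptt_replay (hP : IsNSystem n (Set.Icc u v) P) (huv : u < v) (hPc : ∀ j, P v j ≤ c j)
    {i : Fin n} {q : ℝ} (hb : ∀ j, i < j → bb u v P c j ≤ q) (ha : q ≤ aa u v P c i)
    (j : Fin n) :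
    Ptt u v P c q j = P (q - SS v P c i) j + (if i < j then DD v P c j else 0) := by
  rw [Ptt, AA_replay hP huv hPc hb ha, cl_replay hPc hb ha]

lemma Ptt_ride (hP : IsNSystem n (Set.Icc u v) P) (huv : u < v) (hPc : ∀ j, P v j ≤ c j)
    {i : Fin n} {q : ℝ} (h1 : aa u v P c i ≤ q) (h2 : q ≤ bb u v P c i) (j : Fin n) :
    Ptt u v P c q j = P (rho u v P i) j +
      (if j = i then q - aa u v P c i else if i < j then DD v P c j else 0) := by
  rw [Ptt, AA_ride hP huv hPc h1 h2, cl_ride hPc h1 h2]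

lemma cover (hP : IsNSystem n (Set.Icc u v) P) (huv : u < v) {q : ℝ}
    (hq2 : q ≤ bb u v P c 0) :
    ∃ i : Fin n, (∀ j, i < j → bb u v P c j < q) ∧ q ≤ bb u v P c i := by
  have hTne : (Finset.univ.filter (fun i : Fin n => q ≤ bb u v P c i)).Nonempty :=
    ⟨0, Finset.mem_filter.mpr ⟨Finset.mem_univ _, hq2⟩⟩
  obtain ⟨i₁, hi₁⟩ : ∃ x, x = Finset.max' _ hTne := ⟨_, rfl⟩
  have hmem : q ≤ bb u v P c i₁ := by
    have h := Finset.max'_mem _ hTne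
    rw [← hi₁] at h
    exact (Finset.mem_filter.mp h).2
  have hgt : ∀ j, i₁ < j → bb u v P c j < q := by
    intro j hj
    by_contra hh
    push_neg at hh
    have hjT := Finset.le_max' (Finset.univ.filter (fun i : Fin n => q ≤ bb u v P c i)) j
      (Finset.mem_filter.mpr ⟨Finset.mem_univ j, hh⟩)
    rw [← hi₁] at hjT
    exact absurd hjT (not_le.mpr hj)
  exact ⟨i₁, hgt, hmem⟩

lemma cover_right (hP : IsNSystem n (Set.Icc u v) P) (huv : u < v) {q : ℝ}
    (hq2 : q < bb u v P c 0) :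
    ∃ i : Fin n, (∀ j, i < j → bb u v P c j ≤ q) ∧ q < bb u v P c i := by
  have hTne : (Finset.univ.filter (fun i : Fin n => q < bb u v P c i)).Nonempty :=
    ⟨0, Finset.mem_filter.mpr ⟨Finset.mem_univ _, hq2⟩⟩
  obtain ⟨i₂, hi₂⟩ : ∃ x, x = Finset.max' _ hTne := ⟨_, rfl⟩
  have hmem : q < bb u v P c i₂ := by
    have h := Finset.max'_mem _ hTne
    rw [← hi₂] at h
    exact (Finset.mem_filter.mp h).2
  have hgt : ∀ j, i₂ < j → bb u v P c j ≤ q := by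
    intro j hj
    by_contra hh
    push_neg at hh
    have hjT := Finset.le_max' (Finset.univ.filter (fun i : Fin n => q < bb u v P c i)) j
      (Finset.mem_filter.mpr ⟨Finset.mem_univ j, hh⟩)
    rw [← hi₂] at hjT
    exact absurd hjT (not_le.mpr hj)
  exact ⟨i₂, hgt, hmem⟩

lemma cl_sum (hP : IsNSystem n (Set.Icc u v) P) (huv : u < v) (hPc : ∀ j, P v j ≤ c j)
    {q : ℝ} (hq2 : q ≤ bb u v P c 0) :
    AA u v P c q + ∑ j, cl u v P c q j = q := by
  obtain ⟨i, hgt, hble⟩ := cover (c := c) hP huv hq2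
  rcases le_or_gt (aa u v P c i) q with h1 | h1
  · have h2 := hble
    rw [AA_ride hP huv hPc h1 h2]
    have : ∀ j, cl u v P c q j = (if j = i then q - aa u v P c i else 0) +
        (if i < j then DD v P c j else 0) := by
      intro j
      rw [cl_ride hPc h1 h2]
      rcases eq_or_ne j i with rfl | hne
      · simp [lt_irrefl]
      · rw [if_neg hne, if_neg hne]; exact (zero_add _).symm
    rw [Finset.sum_congr rfl (fun j _ => this j), Finset.sum_add_distrib,
      Finset.sum_ite_eq' Finset.univ i (fun _ => q - aa u v P c i), ite_sum_Ioi]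
    simp only [Finset.mem_univ, if_true]
    rw [aa]
    ring
  · rw [AA_replay hP huv hPc (fun j hj => le_of_lt (hgt j hj)) (le_of_lt h1),
      Finset.sum_congr rfl (fun j _ => cl_replay hPc (fun j hj => le_of_lt (hgt j hj)) (le_of_lt h1) j),
      ite_sum_Ioi]
    ring

lemma Ptt_S1 (hP : IsNSystem n (Set.Icc u v) P) (huv : u < v) (hPc : ∀ j, P v j ≤ c j)
    (hc : StrictMono c) {q : ℝ} (hq : q ∈ Set.Icc u (bb u v P c 0)) :
    (∀ i, 0 ≤ Ptt u v P c q i) ∧ Monotone (Ptt u v P c q) ∧ (∑ i, Ptt u v P c q i) = q := by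
  have hAm : AA u v P c q ∈ Set.Icc u v := AA_mapsto hP huv hPc hq.1
  refine ⟨?_, ?_, ?_⟩
  · intro i
    rw [Ptt]
    have h1 := (PS1 hP _ hAm).1 i
    have h2 := cl_nonneg (u := u) hPc q i
    linarith
  · intro i i' hii'
    rcases eq_or_lt_of_le hii' with rfl | hlt
    · exact le_rfl
    show Ptt u v P c q i ≤ Ptt u v P c q i'
    rcases le_or_gt q (aa u v P c i) with h | h
    · have hcl : cl u v P c q i = 0 := by
        rw [cl, min_eq_left h, min_eq_left (le_trans h (aa_le_bb hPc i))]
        ring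
      rw [Ptt, Ptt, hcl]
      have h1 := (PS1 hP _ hAm).2.1 hii'
      have h2 := cl_nonneg (u := u) hPc q i'
      linarith
    · have hcl : cl u v P c q i' = DD v P c i' := by
        have hb : bb u v P c i' ≤ q := le_trans (bb_le_aa hPc hlt) (le_of_lt h)
        rw [cl, min_eq_right hb, min_eq_right (le_trans (aa_le_bb hPc i') hb), bb]
        ring
      have hrho : rho u v P i ≤ AA u v P c q := AA_rho_le hP huv hPc (le_of_lt h)
      have hconst : P (AA u v P c q) i' = P v i' := rho_const hP huv hii' hAm hrho
      rw [Ptt, Ptt, hcl, hconst]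
      have h1 : P (AA u v P c q) i ≤ P v i := Pmono hP i hAm ⟨le_of_lt huv, le_rfl⟩ hAm.2
      have h2 : cl u v P c q i ≤ DD v P c i := cl_le_DD (u := u) hPc q i
      have h3 : c i ≤ c i' := le_of_lt (hc hlt)
      simp only [DD] at h2 ⊢
      linarith
  · have : ∀ j, Ptt u v P c q j = P (AA u v P c q) j + cl u v P c q j := fun j => rfl
    rw [Finset.sum_congr rfl (fun j _ => this j), Finset.sum_add_distrib,
      (PS1 hP _ hAm).2.2, cl_sum hP huv hPc hq.2]


lemma eVec_eq (k j : Fin n) : (eVec n (k : ℕ)) j = if j = k then 1 else 0 := by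
  rw [eVec]
  rcases eq_or_ne j k with rfl | hne
  · simp
  · rw [if_neg hne, if_neg (fun hh => hne (Fin.ext hh))]

lemma ride_formula (hP : IsNSystem n (Set.Icc u v) P) (huv : u < v) (hPc : ∀ j, P v j ≤ c j)
    {i : Fin n} {q t : ℝ} (ha : aa u v P c i ≤ q) (hb : q ≤ bb u v P c i)
    (ha' : aa u v P c i ≤ t) (hb' : t ≤ bb u v P c i) :
    Ptt u v P c t = Ptt u v P c q + (t - q) • eVec n i := by
  funext j
  have h1 := Ptt_ride hP huv hPc ha' hb' j
  have h2 := Ptt_ride hP huv hPc ha hb j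
  show Ptt u v P c t j = Ptt u v P c q j + (t - q) * (eVec n (i : ℕ)) j
  rw [h1, h2, eVec_eq]
  rcases eq_or_ne j i with rfl | hne
  · rw [if_pos rfl, if_pos rfl, if_pos rfl]; ring
  · rw [if_neg hne, if_neg hne, if_neg hne]; ring

lemma replay_formula (hP : IsNSystem n (Set.Icc u v) P) (huv : u < v) (hPc : ∀ j, P v j ≤ c j)
    {i : Fin n} {q t : ℝ} (hbz : ∀ j, i < j → bb u v P c j ≤ q) (haz : q ≤ aa u v P c i)
    (hbz' : ∀ j, i < j → bb u v P c j ≤ t) (haz' : t ≤ aa u v P c i) {k : Fin n}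
    (hPf : P (t - SS v P c i) =
      P (q - SS v P c i) + ((t - SS v P c i) - (q - SS v P c i)) • eVec n k) :
    Ptt u v P c t = Ptt u v P c q + (t - q) • eVec n k := by
  funext j
  have h1 := Ptt_replay hP huv hPc hbz' haz' j
  have h2 := Ptt_replay hP huv hPc hbz haz j
  have h3 := apply_slope hPf j
  show Ptt u v P c t j = Ptt u v P c q j + (t - q) * (eVec n (k : ℕ)) j
  rw [h1, h3, h2, eVec_eq]
  rcases eq_or_ne j k with rfl | hne
  · rw [if_pos rfl, if_pos rfl]; ring
  · rw [if_neg hne, if_neg hne]; ring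

/-- Right behavior of the extended system. -/
lemma RB (hP : IsNSystem n (Set.Icc u v) P) (huv : u < v) (hPc : ∀ j, P v j ≤ c j)
    {q : ℝ} (hq1 : u ≤ q) (hq2 : q < bb u v P c 0) :
    ∃ ε > (0:ℝ), ∃ k i : Fin n,
      (∀ t ∈ Set.Icc u (bb u v P c 0) ∩ Set.Icc q (q + ε),
        Ptt u v P c t = Ptt u v P c q + (t - q) • eVec n k) ∧
      ((aa u v P c i ≤ q ∧ q < bb u v P c i ∧ k = i) ∨
       ((∀ j, i < j → bb u v P c j ≤ q) ∧ q < aa u v P c i ∧ k ≤ i ∧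
         q - SS v P c i ∈ Set.Icc u v ∧
         (∀ j, i < j → P (q - SS v P c i) j = P v j) ∧
         (∀ t ∈ Set.Icc u v ∩ Set.Icc (q - SS v P c i) (q - SS v P c i + ε),
           P t = P (q - SS v P c i) + (t - (q - SS v P c i)) • eVec n k))) := by
  obtain ⟨i, hgt, hlt⟩ := cover_right (c := c) hP huv hq2
  rcases le_or_gt (aa u v P c i) q with ha | ha
  · -- ride zone
    refine ⟨bb u v P c i - q, by linarith, i, i, fun t ht => ?_, Or.inl ⟨ha, hlt, rfl⟩⟩
    have ht1 : aa u v P c i ≤ t := le_trans ha ht.2.1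
    have ht2 : t ≤ bb u v P c i := by have := ht.2.2; linarith
    exact ride_formula hP huv hPc ha (le_of_lt hlt) ht1 ht2
  · -- replay zone
    obtain ⟨t₀, ht₀⟩ : ∃ x, x = q - SS v P c i := ⟨_, rfl⟩
    have haa : aa u v P c i = rho u v P i + SS v P c i := rfl
    have ht₀v : t₀ < rho u v P i := by rw [ht₀]; rw [aa] at ha; linarith
    have hrhole : ∀ j, i < j → rho u v P j ≤ t₀ := by
      intro j hj
      have hsucc : i.1 + 1 < n := by have := j.2; rw [Fin.lt_def] at hj; omega
      have hj₀ : (⟨i.1 + 1, hsucc⟩ : Fin n) ≤ j := by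
        rw [Fin.le_def]; rw [Fin.lt_def] at hj; simp; omega
      have h1 : rho u v P j ≤ rho u v P ⟨i.1 + 1, hsucc⟩ := rho_anti hj₀
      have h2 : bb u v P c ⟨i.1 + 1, hsucc⟩ ≤ q := hgt _ (by rw [Fin.lt_def]; simp)
      have h3 : bb u v P c ⟨i.1 + 1, hsucc⟩ = rho u v P ⟨i.1 + 1, hsucc⟩ + SS v P c i := by
        rw [bb_eq]
        congr 1
        rw [SS, Ioi_eq_Ici_succ i hsucc]
      rw [ht₀]; linarith
    have ht₀u : u ≤ t₀ := by
      rcases Nat.lt_or_ge (i.1 + 1) n with hsucc | hsucc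
      · have h1 := hrhole ⟨i.1 + 1, hsucc⟩ (by rw [Fin.lt_def]; simp)
        have h2 := (rho_mem hP huv (⟨i.1 + 1, hsucc⟩ : Fin n)).1
        linarith
      · have : SS v P c i = 0 := SS_last i (by have := i.2; omega)
        rw [ht₀, this]; linarith
    have ht₀m : t₀ ∈ Set.Icc u v := ⟨ht₀u, le_trans (le_of_lt ht₀v) (rho_mem hP huv i).2⟩
    have hconst : ∀ j, i < j → P t₀ j = P v j := fun j hj =>
      rho_const hP huv (le_refl j) ht₀m (hrhole j hj)
    obtain ⟨εp, hεp, k, ℓ, hLp, hRp, _⟩ := PS2 hP t₀ ht₀m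
    have hki : k ≤ i := by
      by_contra hh
      push_neg at hh
      obtain ⟨t₁, ht₁⟩ : ∃ x, x = min v (t₀ + εp) := ⟨_, rfl⟩
      have ht₀v' : t₀ < v := lt_of_lt_of_le ht₀v (rho_mem hP huv i).2
      have h1 : t₀ < t₁ := by rw [ht₁]; exact lt_min ht₀v' (by linarith)
      have h2 : t₁ ∈ Set.Icc u v ∩ Set.Icc t₀ (t₀ + εp) :=
        ⟨⟨le_trans ht₀u (le_of_lt h1), by rw [ht₁]; exact min_le_left _ _⟩,
          le_of_lt h1, by rw [ht₁]; exact min_le_right _ _⟩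
      have h3 := apply_slope (hRp t₁ h2) k
      rw [if_pos rfl] at h3
      have h4 : P t₁ k = P v k := rho_const hP huv (le_refl k) h2.1
        (le_trans (hrhole k hh) (le_of_lt h1))
      have h5 : P t₀ k = P v k := hconst k hh
      rw [h4, h5] at h3
      linarith
    obtain ⟨ε, hε⟩ : ∃ x, x = min εp (aa u v P c i - q) := ⟨_, rfl⟩
    have hε0 : 0 < ε := by rw [hε]; exact lt_min hεp (by linarith)
    refine ⟨ε, hε0, k, i, fun t ht => ?_, Or.inr ⟨hgt, ha, hki, ht₀ ▸ ht₀m, ht₀ ▸ hconst, ?_⟩⟩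
    · have htq : q ≤ t := ht.2.1
      have htaa : t ≤ aa u v P c i := by
        have h1 := ht.2.2
        have h2 : ε ≤ aa u v P c i - q := by rw [hε]; exact min_le_right _ _
        linarith
      have hbz' : ∀ j, i < j → bb u v P c j ≤ t := fun j hj => le_trans (hgt j hj) htq
      apply replay_formula hP huv hPc hgt (le_of_lt ha) hbz' htaa
      rw [← ht₀]
      have hmem : t - SS v P c i ∈ Set.Icc u v ∩ Set.Icc t₀ (t₀ + εp) := by
        refine ⟨⟨by rw [ht₀] at *; linarith, ?_⟩, by rw [ht₀]; linarith, ?_⟩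
        · rw [aa] at htaa
          have := (rho_mem hP huv i).2
          linarith
        · have h2 : ε ≤ εp := by rw [hε]; exact min_le_left _ _
          have := ht.2.2
          rw [ht₀]; linarith
      exact hRp _ hmem
    · intro t htm
      rw [← ht₀] at htm ⊢
      apply hRp
      refine ⟨htm.1, htm.2.1, ?_⟩
      have h2 : ε ≤ εp := by rw [hε]; exact min_le_left _ _
      have := htm.2.2
      linarith

/-- Left behavior of the extended system. -/
lemma LB (hP : IsNSystem n (Set.Icc u v) P) (huv : u < v) (hPc : ∀ j, P v j ≤ c j)
    {q : ℝ} (hq1 : u < q) (hq2 : q ≤ bb u v P c 0) :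
    ∃ ε > (0:ℝ), ∃ ℓ i : Fin n,
      (∀ t ∈ Set.Icc u (bb u v P c 0) ∩ Set.Icc (q - ε) q,
        Ptt u v P c t = Ptt u v P c q + (t - q) • eVec n ℓ) ∧
      ((aa u v P c i < q ∧ q ≤ bb u v P c i ∧ ℓ = i) ∨
       ((∀ j, i < j → bb u v P c j < q) ∧ q ≤ aa u v P c i ∧ ℓ ≤ i ∧
         q - SS v P c i ∈ Set.Icc u v ∧ u < q - SS v P c i ∧
         (∀ j, i < j → P (q - SS v P c i) j = P v j) ∧
         (q = aa u v P c i → ℓ = i) ∧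
         (∀ t ∈ Set.Icc u v ∩ Set.Icc (q - SS v P c i - ε) (q - SS v P c i),
           P t = P (q - SS v P c i) + (t - (q - SS v P c i)) • eVec n ℓ))) := by
  obtain ⟨i, hgt, hlt⟩ := cover (c := c) hP huv hq2
  rcases lt_or_ge (aa u v P c i) q with ha | ha
  · -- ride zone
    refine ⟨q - aa u v P c i, by linarith, i, i, fun t ht => ?_, Or.inl ⟨ha, hlt, rfl⟩⟩
    have ht1 : aa u v P c i ≤ t := by have := ht.2.1; linarith
    have ht2 : t ≤ bb u v P c i := le_trans ht.2.2 hlt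
    exact ride_formula hP huv hPc (le_of_lt ha) hlt ht1 ht2
  · -- replay zone
    obtain ⟨t₀, ht₀⟩ : ∃ x, x = q - SS v P c i := ⟨_, rfl⟩
    have ht₀v : t₀ ≤ rho u v P i := by rw [ht₀]; rw [aa] at ha; linarith
    have hrholt : ∀ j, i < j → rho u v P j < t₀ := by
      intro j hj
      have hsucc : i.1 + 1 < n := by have := j.2; rw [Fin.lt_def] at hj; omega
      have hj₀ : (⟨i.1 + 1, hsucc⟩ : Fin n) ≤ j := by
        rw [Fin.le_def]; rw [Fin.lt_def] at hj; simp; omega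
      have h1 : rho u v P j ≤ rho u v P ⟨i.1 + 1, hsucc⟩ := rho_anti hj₀
      have h2 : bb u v P c ⟨i.1 + 1, hsucc⟩ < q := hgt _ (by rw [Fin.lt_def]; simp)
      have h3 : bb u v P c ⟨i.1 + 1, hsucc⟩ = rho u v P ⟨i.1 + 1, hsucc⟩ + SS v P c i := by
        rw [bb_eq]
        congr 1
        rw [SS, Ioi_eq_Ici_succ i hsucc]
      rw [ht₀]; linarith
    have ht₀u : u < t₀ := by
      rcases Nat.lt_or_ge (i.1 + 1) n with hsucc | hsucc
      · have h1 := hrholt ⟨i.1 + 1, hsucc⟩ (by rw [Fin.lt_def]; simp)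
        have h2 := (rho_mem hP huv (⟨i.1 + 1, hsucc⟩ : Fin n)).1
        linarith
      · have : SS v P c i = 0 := SS_last i (by have := i.2; omega)
        rw [ht₀, this]; linarith
    have ht₀m : t₀ ∈ Set.Icc u v := ⟨le_of_lt ht₀u, le_trans ht₀v (rho_mem hP huv i).2⟩
    have hconst : ∀ j, i < j → P t₀ j = P v j := fun j hj =>
      rho_const hP huv (le_refl j) ht₀m (le_of_lt (hrholt j hj))
    obtain ⟨εp, hεp, k, ℓ, hLp, hRp, _⟩ := PS2 hP t₀ ht₀m
    have hwit : ∀ s : ℝ, s = max (t₀ - εp) u → s ∈ Set.Icc u v ∩ Set.Icc (t₀ - εp) t₀ ∧ s < t₀ := by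
      intro s hs
      constructor
      · refine ⟨⟨by rw [hs]; exact le_max_right _ _, ?_⟩, by rw [hs]; exact le_max_left _ _, ?_⟩
        · rw [hs]
          apply max_le (by linarith [ht₀m.2]) (by linarith)
        · rw [hs]
          apply max_le (by linarith) (le_of_lt ht₀u)
      · rw [hs]
        apply max_lt (by linarith) ht₀u
    have hli : ℓ ≤ i := by
      rcases Nat.lt_or_ge (i.1 + 1) n with hsucc | hsucc
      · by_contra hh
        push_neg at hh
        obtain ⟨t₁, ht₁⟩ : ∃ x, x = max (t₀ - εp) (rho u v P ⟨i.1 + 1, hsucc⟩) := ⟨_, rfl⟩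
        have hρ₀ : rho u v P ⟨i.1 + 1, hsucc⟩ < t₀ := hrholt _ (by rw [Fin.lt_def]; simp)
        have hρu := (rho_mem hP huv (⟨i.1 + 1, hsucc⟩ : Fin n)).1
        have h1 : t₁ < t₀ := by rw [ht₁]; exact max_lt (by linarith) hρ₀
        have h2 : t₁ ∈ Set.Icc u v ∩ Set.Icc (t₀ - εp) t₀ := by
          refine ⟨⟨by rw [ht₁]; exact le_trans hρu (le_max_right _ _),
            le_trans (le_of_lt h1) ht₀m.2⟩, by rw [ht₁]; exact le_max_left _ _, le_of_lt h1⟩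
        have h3 := apply_slope (hLp t₁ h2) ℓ
        rw [if_pos rfl] at h3
        have hρℓ : rho u v P ℓ ≤ t₁ := by
          rw [ht₁]
          refine le_trans (rho_anti ?_) (le_max_right _ _)
          rw [Fin.le_def]; rw [Fin.lt_def] at hh; simp; omega
        have h4 : P t₁ ℓ = P v ℓ := rho_const hP huv (le_refl ℓ) h2.1 hρℓ
        have h5 : P t₀ ℓ = P v ℓ := hconst ℓ hh
        rw [h4, h5] at h3
        linarith
      · rw [Fin.le_def]
        have := ℓ.2
        have := i.2
        omega
    have hextra : q = aa u v P c i → ℓ = i := by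
      intro hqa
      have ht₀ρ : t₀ = rho u v P i := by rw [ht₀, hqa, aa]; ring
      -- rho i = sig i
      have hsig : sig u v P i = rho u v P i := by
        obtain ⟨m, him, hmeq⟩ := rho_exists (u := u) (v := v) (P := P) i
        rcases eq_or_lt_of_le him with rfl | hmi
        · exact hmeq.symm
        · exfalso
          have h1 : sig u v P m ≤ rho u v P m := sig_le_rho le_rfl
          have h2 : rho u v P m < t₀ := hrholt m hmi
          rw [ht₀ρ, hmeq] at h2
          linarith
      by_contra hh
      obtain ⟨t₁, ht₁⟩ : ∃ x, x = max (t₀ - εp) u := ⟨_, rfl⟩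
      obtain ⟨hmem₁, hlt₁⟩ := hwit t₁ ht₁
      have h3 := apply_slope (hLp t₁ hmem₁) i
      rw [if_neg (fun hh2 => hh hh2.symm)] at h3
      have h4 : P t₁ i < P v i := by
        apply (sig_facts hP huv i).2.2.2 t₁ hmem₁.1
        rw [hsig, ← ht₀ρ]
        exact hlt₁
      have h5 : P t₀ i = P v i := by
        rw [ht₀ρ]
        exact rho_const hP huv le_rfl (rho_mem hP huv i) le_rfl
      rw [h3, h5] at h4
      linarith
    obtain ⟨ε, hε⟩ : ∃ x, x = min εp (if hs : i.1 + 1 < n then q - bb u v P c ⟨i.1 + 1, hs⟩ else q - u) := ⟨_, rfl⟩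
    have hbj₀ : ∀ hs : i.1 + 1 < n, bb u v P c ⟨i.1 + 1, hs⟩ < q := fun hs =>
      hgt _ (by rw [Fin.lt_def]; simp)
    have hε0 : 0 < ε := by
      rw [hε]
      apply lt_min hεp
      split_ifs with hs
      · linarith [hbj₀ hs]
      · linarith
    have hεle : ε ≤ εp := by rw [hε]; exact min_le_left _ _
    have hbzt : ∀ t, q - ε ≤ t → ∀ j, i < j → bb u v P c j ≤ t := by
      intro t htt j hj
      have hsucc : i.1 + 1 < n := by have := j.2; rw [Fin.lt_def] at hj; omega
      have hj₀ : (⟨i.1 + 1, hsucc⟩ : Fin n) ≤ j := by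
        rw [Fin.le_def]; rw [Fin.lt_def] at hj; simp; omega
      have h1 : bb u v P c j ≤ bb u v P c ⟨i.1 + 1, hsucc⟩ := bb_anti hPc hj₀
      have h2 : ε ≤ q - bb u v P c ⟨i.1 + 1, hsucc⟩ := by
        rw [hε]
        refine le_trans (min_le_right _ _) ?_
        rw [dif_pos hsucc]
      linarith
    refine ⟨ε, hε0, ℓ, i, fun t ht => ?_,
      Or.inr ⟨hgt, ha, hli, ht₀ ▸ ht₀m, ht₀ ▸ ht₀u, ht₀ ▸ hconst, hextra, ?_⟩⟩
    · have htq : t ≤ q := ht.2.2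
      have htaa : t ≤ aa u v P c i := le_trans htq ha
      have hbz' : ∀ j, i < j → bb u v P c j ≤ t := hbzt t ht.2.1 
      apply replay_formula hP huv hPc (fun j hj => le_of_lt (hgt j hj)) ha hbz' htaa
      rw [← ht₀]
      have hmem : t - SS v P c i ∈ Set.Icc u v ∩ Set.Icc (t₀ - εp) t₀ := by
        refine ⟨⟨?_, ?_⟩, ?_, by rw [ht₀]; linarith⟩
        · rcases Nat.lt_or_ge (i.1 + 1) n with hsucc | hsucc
          · have h1 : bb u v P c ⟨i.1 + 1, hsucc⟩ ≤ t := hbzt t ht.2.1 _ (by rw [Fin.lt_def]; simp)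
            have h3 : bb u v P c ⟨i.1 + 1, hsucc⟩ = rho u v P ⟨i.1 + 1, hsucc⟩ + SS v P c i := by
              rw [bb_eq]
              congr 1
              rw [SS, Ioi_eq_Ici_succ i hsucc]
            have h2 := (rho_mem hP huv (⟨i.1 + 1, hsucc⟩ : Fin n)).1
            linarith
          · have h0 : SS v P c i = 0 := SS_last i (by have := i.2; omega)
            rw [h0]
            have h2 : ε ≤ q - u := by
              rw [hε]
              refine le_trans (min_le_right _ _) ?_
              rw [dif_neg (by omega)]
            have := ht.2.1
            linarith
        · rw [aa] at htaa
          have := (rho_mem hP huv i).2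
          linarith
        · have := ht.2.1
          rw [ht₀]
          linarith
      exact hLp _ hmem
    · intro t htm
      rw [← ht₀] at htm ⊢
      apply hLp
      refine ⟨htm.1, ?_, htm.2.2⟩
      have := htm.2.1
      linarith


lemma value_props (hR : IsRigid n δ (Set.Icc u v) P) (huv : u < v) (hPc : ∀ j, P v j ≤ c j)
    (hc : StrictMono c) (hcδ : ∀ j, ∃ m : ℤ, 0 < m ∧ c j = δ * m)
    {i : Fin n} {t₀ : ℝ} (hsw : IsSwitchNumber n (Set.Icc u v) P t₀)
    (hconst : ∀ j, i < j → P t₀ j = P v j) :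
    (∀ j, 0 < P t₀ j + (if i < j then DD v P c j else 0)) ∧
    (∀ j j' : Fin n, j < j' →
      P t₀ j + (if i < j then DD v P c j else 0) <
      P t₀ j' + (if i < j' then DD v P c j' else 0)) ∧
    (∀ j, ∃ m : ℤ, P t₀ j + (if i < j then DD v P c j else 0) = δ * m) := by
  have hpos := (hR.1.2.2.2 t₀ hsw).1
  have hsm := (hR.1.2.2.2 t₀ hsw).2
  have hδz := hR.2 t₀ hsw
  have hvz := hR.2 v (v_switch huv)
  refine ⟨?_, ?_, ?_⟩
  · intro j
    split_ifs with h
    · linarith [hpos j, DD_nonneg hPc j]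
    · linarith [hpos j]
  · intro j j' hjj'
    rcases lt_or_ge i j with h | h
    · have h' : i < j' := lt_trans h hjj'
      rw [if_pos h, if_pos h', hconst j h, hconst j' h']
      have e1 : P v j + DD v P c j = c j := by rw [DD]; ring
      have e2 : P v j' + DD v P c j' = c j' := by rw [DD]; ring
      linarith [hc hjj']
    · rw [if_neg (not_lt.mpr h)]
      split_ifs with h'
      · linarith [hsm hjj', DD_nonneg hPc j']
      · linarith [hsm hjj']
  · intro j
    split_ifs with h
    · obtain ⟨m1, hm1⟩ := hδz j
      obtain ⟨mc, _, hmc⟩ := hcδ j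
      obtain ⟨mv, hmv⟩ := hvz j
      refine ⟨m1 + mc - mv, ?_⟩
      rw [DD, hm1, hmc, hmv]
      push_cast
      ring
    · obtain ⟨m1, hm1⟩ := hδz j
      exact ⟨m1, by rw [add_zero, hm1]⟩

lemma no_gt_last (j : Fin n) (hj : (⟨n - 1, by have := Nat.pos_of_ne_zero (NeZero.ne n); omega⟩ : Fin n) < j) : False := by
  rw [Fin.lt_def] at hj
  have := j.2
  simp at hj
  omega

lemma Ptt_at_u (hP : IsNSystem n (Set.Icc u v) P) (huv : u < v) (hPc : ∀ j, P v j ≤ c j) :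
    Ptt u v P c u = P u := by
  funext j
  have hn0 := Nat.pos_of_ne_zero (NeZero.ne n)
  have hb : ∀ j : Fin n, (⟨n - 1, by omega⟩ : Fin n) < j → bb u v P c j ≤ u :=
    fun j hj => (no_gt_last j hj).elim
  have ha : u ≤ aa u v P c ⟨n - 1, by omega⟩ := u_le_aa hP huv hPc _
  have h0 : SS v P c ⟨n - 1, by omega⟩ = 0 := SS_last _ (by simp; omega)
  rw [Ptt_replay hP huv hPc hb ha j, h0,
    if_neg (fun hh => no_gt_last j hh)]
  norm_num

lemma Ptt_at_w (hP : IsNSystem n (Set.Icc u v) P) (huv : u < v) (hPc : ∀ j, P v j ≤ c j) :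
    Ptt u v P c (bb u v P c 0) = c := by
  funext j
  have ha : aa u v P c 0 ≤ bb u v P c 0 := aa_le_bb hPc 0
  rw [Ptt_ride hP huv hPc ha le_rfl j, rho_zero hP huv]
  rcases eq_or_ne j 0 with rfl | hne
  · rw [if_pos rfl]
    show P v 0 + (bb u v P c 0 - aa u v P c 0) = c 0
    rw [bb, DD]
    ring
  · have hpos : (0 : Fin n) < j := by
      rw [Fin.lt_def]
      have h1 : (j : ℕ) ≠ 0 := fun h => hne (Fin.ext (by simp [h]))
      show (0:ℕ) < (j:ℕ)
      omega
    rw [if_neg hne, if_pos hpos, DD]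
    ring

lemma Ptt_S2 (hR : IsRigid n δ (Set.Icc u v) P) (huv : u < v) (hPc : ∀ j, P v j ≤ c j)
    {q : ℝ} (hq : q ∈ Set.Icc u (bb u v P c 0)) :
    ∃ ε > (0:ℝ), ∃ k ℓ : Fin n,
      (∀ t ∈ Set.Icc u (bb u v P c 0) ∩ Set.Icc (q - ε) q,
        Ptt u v P c t = Ptt u v P c q + (t - q) • eVec n ℓ) ∧
      (∀ t ∈ Set.Icc u (bb u v P c 0) ∩ Set.Icc q (q + ε),
        Ptt u v P c t = Ptt u v P c q + (t - q) • eVec n k) ∧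
      (q ∈ interior (Set.Icc u (bb u v P c 0)) → ℓ < k →
        ∀ j : Fin n, ℓ ≤ j → j ≤ k → Ptt u v P c q j = Ptt u v P c q ℓ) := by
  have hP := hR.1.1
  have hvw : v ≤ bb u v P c 0 := by rw [bb_zero hP huv]; exact v_le_w hP huv hPc
  have huw : u < bb u v P c 0 := lt_of_lt_of_le huv hvw
  rcases eq_or_lt_of_le hq.1 with hqu | hqu
  · -- q = u
    obtain ⟨ε, hε, k, i, hf, _⟩ := RB (c := c) hP huv hPc le_rfl huw
    rw [← hqu]
    refine ⟨ε, hε, k, k, fun t ht => ?_, hf, fun hint => ?_⟩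
    · have : t = u := le_antisymm ht.2.2 ht.1.1
      subst this
      simp
    · rw [interior_Icc] at hint
      exact absurd hint.1 (lt_irrefl u)
  rcases eq_or_lt_of_le hq.2 with hqw | hqw
  · -- q = w
    obtain ⟨ε, hε, ℓ, i, hf, _⟩ := LB (c := c) hP huv hPc (hqw ▸ huw) (le_of_eq hqw)
    refine ⟨ε, hε, ℓ, ℓ, hf, fun t ht => ?_, fun hint => ?_⟩
    · have : t = q := le_antisymm (hqw ▸ ht.1.2) ht.2.1
      subst this
      simp
    · rw [interior_Icc, hqw] at hint
      exact absurd hint.2 (lt_irrefl _)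
  -- interior case
  obtain ⟨εR, hεR, k, i₂, hfR, hcR⟩ := RB (c := c) hP huv hPc hq.1 hqw
  obtain ⟨εL, hεL, ℓ, i₁, hfL, hcL⟩ := LB (c := c) hP huv hPc hqu hq.2
  refine ⟨min εR εL, lt_min hεR hεL, k, ℓ, fun t ht => ?_, fun t ht => ?_, ?_⟩
  · exact hfL t ⟨ht.1, by have := ht.2.1; have := min_le_right εR εL; linarith, ht.2.2⟩
  · exact hfR t ⟨ht.1, ht.2.1, by have := ht.2.2; have := min_le_left εR εL; linarith⟩
  intro _ hlk
  rcases hcR with ⟨haR, hbR, hkR⟩ | ⟨hbzR, haR, hkiR, ht₀mR, hconstR, hfRP⟩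
  · -- right ride, k = i₂
    rcases hcL with ⟨haL, hbL, hlL⟩ | ⟨hbzL, haL, hliL, ht₀mL, ht₀uL, hconstL, hextraL, hfLP⟩
    · exfalso
      have h12 : i₁ < i₂ := by rw [← hkR, ← hlL]; exact hlk
      have := bb_le_aa (u := u) hPc h12
      linarith
    · exfalso
      rcases lt_trichotomy i₁ i₂ with h12 | h12 | h12
      · have := hbzL i₂ h12
        linarith
      · have hqa : q = aa u v P c i₁ := le_antisymm haL (h12 ▸ haR)
        have : ℓ = i₁ := hextraL hqa
        rw [hkR] at hlk
        rw [this, h12] at hlk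
        exact lt_irrefl _ hlk
      · have := bb_le_aa (u := u) hPc h12
        have hqa : q = aa u v P c i₁ :=
          le_antisymm haL (by linarith [aa_le_bb (u := u) hPc i₁, haR])
        have hl : ℓ = i₁ := hextraL hqa
        rw [hkR, hl] at hlk
        exact absurd (lt_trans hlk h12) (lt_irrefl _)
  · -- right replay
    rcases hcL with ⟨haL, hbL, hlL⟩ | ⟨hbzL, haL, hliL, ht₀mL, ht₀uL, hconstL, hextraL, hfLP⟩
    · exfalso
      have h12 : i₁ < i₂ := lt_of_lt_of_le (hlL ▸ hlk) hkiR
      have := bb_le_aa (u := u) hPc h12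
      linarith [aa_le_bb (u := u) hPc i₂]
    · rcases lt_trichotomy i₁ i₂ with h12 | h12 | h12
      · exfalso
        have := hbzL i₂ h12
        linarith [aa_le_bb (u := u) hPc i₂]
      · -- same replay zone
        subst h12
        obtain ⟨εp, hεp, kp, ℓp, hLp, hRp, hS3p⟩ := PS2 hP _ ht₀mR
        have ht₀v : q - SS v P c i₁ < v := by
          rw [aa] at haR
          linarith [(rho_mem hP huv i₁).2]
        have hkp : k = kp := slope_unique_right ht₀mR ht₀v hεR hεp hfRP hRp
        have hℓp : ℓ = ℓp := slope_unique_left ht₀mR ht₀uL hεL hεp hfLP hLp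
        have hint' : q - SS v P c i₁ ∈ interior (Set.Icc u v) := by
          rw [interior_Icc]
          exact ⟨ht₀uL, ht₀v⟩
        have hlk' : ℓp < kp := by rw [← hkp, ← hℓp]; exact hlk
        intro j hℓj hjk
        have e1 := Ptt_replay hP huv hPc hbzR (le_of_lt haR) j
        have e2 := Ptt_replay hP huv hPc hbzR (le_of_lt haR) ℓ
        rw [e1, e2, if_neg (not_lt.mpr (le_trans hjk hkiR)),
          if_neg (not_lt.mpr hliL), add_zero, add_zero]
        have h := hS3p hint' hlk' j (by rw [← hℓp]; exact hℓj) (by rw [← hkp]; exact hjk)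
        rw [← hℓp] at h
        exact h
      · exfalso
        have hq1 : bb u v P c i₁ ≤ q := hbzR i₁ h12
        have hqa : q = aa u v P c i₁ :=
          le_antisymm haL (by linarith [aa_le_bb (u := u) hPc i₁])
        have hl : ℓ = i₁ := hextraL hqa
        have : k < i₁ := lt_of_le_of_lt hkiR h12
        rw [hl] at hlk
        exact absurd (lt_trans hlk this) (lt_irrefl _)


lemma Ptt_switch (hR : IsRigid n δ (Set.Icc u v) P) (hδ : 0 < δ) (huv : u < v)
    (hPc : ∀ j, P v j ≤ c j) (hc : StrictMono c)
    (hcδ : ∀ j, ∃ m : ℤ, 0 < m ∧ c j = δ * m) {q : ℝ}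
    (hsw : IsSwitchNumber n (Set.Icc u (bb u v P c 0)) (Ptt u v P c) q) :
    (∀ j, 0 < Ptt u v P c q j) ∧ StrictMono (Ptt u v P c q) ∧
      ∀ j, ∃ m : ℤ, Ptt u v P c q j = δ * m := by
  have hP := hR.1.1
  have hvw : v ≤ bb u v P c 0 := by rw [bb_zero hP huv]; exact v_le_w hP huv hPc
  have huw : u < bb u v P c 0 := lt_of_lt_of_le huv hvw
  obtain ⟨hqm, hcase⟩ := hsw
  rcases hcase with hfr | ⟨hint, ε, hε, k, ℓ, hklt, hfR', hfL'⟩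
  · rw [frontier_Icc (le_of_lt huw)] at hfr
    simp only [Set.mem_insert_iff, Set.mem_singleton_iff] at hfr
    rcases hfr with h | h
    · rw [h, Ptt_at_u hP huv hPc]
      have h1 := hR.1.2.2.2 u (u_switch huv)
      have h2 := hR.2 u (u_switch huv)
      exact ⟨h1.1, h1.2, h2⟩
    · rw [h, Ptt_at_w hP huv hPc]
      refine ⟨fun j => ?_, hc, fun j => ?_⟩
      · obtain ⟨m, hm0, hm⟩ := hcδ j
        rw [hm]
        exact mul_pos hδ (by exact_mod_cast hm0)
      · obtain ⟨m, _, hm⟩ := hcδ j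
        exact ⟨m, hm⟩
  · -- interior switch number
    rw [interior_Icc] at hint
    have hqu : u < q := hint.1
    have hqw : q < bb u v P c 0 := hint.2
    obtain ⟨εR, hεR, k₀, i₂, hfR, hcR⟩ := RB (c := c) hP huv hPc (le_of_lt hqu) hqw
    obtain ⟨εL, hεL, ℓ₀, i₁, hfL, hcL⟩ := LB (c := c) hP huv hPc hqu (le_of_lt hqw)
    have hkk : k = k₀ := slope_unique_right hqm hqw hε hεR hfL' hfR
    have hll : ℓ = ℓ₀ := slope_unique_left hqm hqu hε hεL hfR' hfL
    rw [hkk, hll] at hklt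
    suffices H : ∃ (i : Fin n) (t₀ : ℝ), IsSwitchNumber n (Set.Icc u v) P t₀ ∧
        (∀ j, i < j → P t₀ j = P v j) ∧
        (∀ j, Ptt u v P c q j = P t₀ j + (if i < j then DD v P c j else 0)) by
      obtain ⟨i, t₀, hswP, hconst, hform⟩ := H
      obtain ⟨v1, v2, v3⟩ := value_props hR huv hPc hc hcδ hswP hconst
      refine ⟨fun j => by rw [hform j]; exact v1 j,
        fun a b hab => ?_, fun j => by rw [hform j]; exact v3 j⟩
      have := v2 a b hab
      show Ptt u v P c q a < Ptt u v P c q b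
      rw [hform a, hform b]
      exact this
    rcases hcR with ⟨haR, hbR, hkR⟩ | ⟨hbzR, haR, hkiR, ht₀mR, hconstR, hfRP⟩
    · -- right ride, k₀ = i₂; claim q = aa i₂
      have hqa : q = aa u v P c i₂ := by
        rcases hcL with ⟨haL, hbL, hlL⟩ | ⟨hbzL, haL, hliL, ht₀mL, ht₀uL, hconstL, hextraL, hfLP⟩
        · have h12 : i₂ < i₁ := by rw [← hkR, ← hlL]; exact hklt
          exact le_antisymm (le_trans hbL (bb_le_aa hPc h12)) haR
        · have h12 : i₂ < i₁ := lt_of_lt_of_le (hkR ▸ hklt) hliL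
          exact le_antisymm
            (le_trans haL (le_trans (aa_le_bb hPc i₁) (bb_le_aa hPc h12))) haR
      refine ⟨i₂, rho u v P i₂, rho_switch hP huv i₂,
        fun j hj => rho_const hP huv (le_of_lt hj) (rho_mem hP huv i₂) le_rfl, fun j => ?_⟩
      rw [Ptt_ride hP huv hPc haR (le_of_lt hbR) j]
      congr 1
      by_cases hne : j = i₂
      · subst hne
        rw [if_pos rfl, if_neg (lt_irrefl j), hqa]
        ring
      · rw [if_neg hne]
    · -- right replay
      rcases hcL with ⟨haL, hbL, hlL⟩ | ⟨hbzL, haL, hliL, ht₀mL, ht₀uL, hconstL, hextraL, hfLP⟩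
      · -- left ride
        have h12 : i₂ < i₁ := by
          by_contra hh
          push_neg at hh
          have := aa_anti (u := u) hPc hh
          linarith
        have hqb : q = bb u v P c i₁ := le_antisymm hbL (hbzR i₁ h12)
        have hSSeq : SS v P c i₂ = ∑ j ∈ Finset.Ici i₁, DD v P c j := by
          symm
          apply Finset.sum_subset
          · intro j hj
            rw [Finset.mem_Ici] at hj
            rw [Finset.mem_Ioi]
            exact lt_of_lt_of_le h12 hj
          · intro j hj1 hj2
            rw [Finset.mem_Ioi] at hj1
            rw [Finset.mem_Ici] at hj2
            push_neg at hj2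
            have hb1 : bb u v P c j ≤ q := hbzR j hj1
            have hb2 : q = bb u v P c i₁ := hqb
            have hb3 : bb u v P c i₁ ≤ aa u v P c j := bb_le_aa hPc hj2
            have hD := DD_nonneg hPc j
            have : bb u v P c j = aa u v P c j + DD v P c j := rfl
            linarith
        have ht₀ : q - SS v P c i₂ = rho u v P i₁ := by
          rw [hqb, bb_eq, hSSeq]
          ring
        refine ⟨i₂, q - SS v P c i₂, ?_, hconstR,
          fun j => Ptt_replay hP huv hPc hbzR (le_of_lt haR) j⟩
        rw [ht₀]
        exact rho_switch hP huv i₁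
      · -- left replay
        rcases lt_trichotomy i₁ i₂ with h12 | h12 | h12
        · exfalso
          have := hbzL i₂ h12
          linarith [aa_le_bb (u := u) hPc i₂]
        · -- same zone: genuine replay switch
          subst h12
          obtain ⟨εp, hεp, kp, ℓp, hLp, hRp, _⟩ := PS2 hP _ ht₀mR
          have ht₀v : q - SS v P c i₁ < v := by
            rw [aa] at haR
            linarith [(rho_mem hP huv i₁).2]
          have hkp : k₀ = kp := slope_unique_right ht₀mR ht₀v hεR hεp hfRP hRp
          have hℓp : ℓ₀ = ℓp := slope_unique_left ht₀mR ht₀uL hεL hεp hfLP hLp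
          refine ⟨i₁, q - SS v P c i₁, ?_, hconstR,
            fun j => Ptt_replay hP huv hPc hbzR (le_of_lt haR) j⟩
          refine ⟨ht₀mR, Or.inr ⟨by rw [interior_Icc]; exact ⟨ht₀uL, ht₀v⟩,
            εp, hεp, kp, ℓp, ?_, hLp, hRp⟩⟩
          rw [← hkp, ← hℓp]
          exact hklt
        · -- q = aa i₁
          have hqa : q = aa u v P c i₁ :=
            le_antisymm haL (le_trans (aa_le_bb hPc i₁) (hbzR i₁ h12))
          have hSSeq : SS v P c i₂ = SS v P c i₁ := by
            symm
            apply Finset.sum_subset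
            · intro j hj
              rw [Finset.mem_Ioi] at *
              exact lt_trans h12 hj
            · intro j hj1 hj2
              rw [Finset.mem_Ioi] at hj1 hj2
              push_neg at hj2
              have hb1 : bb u v P c j ≤ q := hbzR j hj1
              have hb3 : aa u v P c i₁ ≤ aa u v P c j := aa_anti hPc hj2
              have hD := DD_nonneg hPc j
              have : bb u v P c j = aa u v P c j + DD v P c j := rfl
              linarith [hqa]
          have ht₀ : q - SS v P c i₂ = rho u v P i₁ := by
            rw [hqa, hSSeq, aa]
            ring
          refine ⟨i₂, q - SS v P c i₂, ?_, hconstR,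
            fun j => Ptt_replay hP huv hPc hbzR (le_of_lt haR) j⟩
          rw [ht₀]
          exact rho_switch hP huv i₁

end Facts





end ExtendRigid

end ExtendAux

/-- **Proposition (extension of a rigid system).** Let `P` be a rigid `n`-system of
mesh `δ` on a compact subinterval `[u,v]` of `(0,∞)` and let `c = (c₁ < ⋯ < c_n)` be
a strictly increasing sequence of positive multiples of `δ` with `P_j(v) ≤ c_j` for
each `j`; put `w = c₁ + ⋯ + c_n`.  Then there are a rigid `n`-system `P̃` of mesh `δ`
on `[u,w]` and a surjective map `A : [u,w] → [u,v]` such that: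
(i) `P̃(q) = P(q)` and `A(q) = q` whenever `q ∈ [u,v]` and `P_n(q) < P_n(v)`;
(ii) `P̃(w) = c`; (iii) `0 ≤ P̃_j(q) − P_j(A(q)) ≤ c_j − P_j(v)` for all `q ∈ [u,w]`
and all `j`. -/
theorem extend_rigid_system (n : ℕ) (hn : 2 ≤ n) (δ : ℝ) (hδ : 0 < δ)
    (u v : ℝ) (hu : 0 < u) (huv : u < v)
    (P : ℝ → RVec n) (hP : IsRigid n δ (Set.Icc u v) P)
    (c : Fin n → ℝ) (hc : StrictMono c)
    (hcδ : ∀ j, ∃ m : ℤ, 0 < m ∧ c j = δ * m)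
    (hPc : ∀ j, P v j ≤ c j) :
    ∃ (Pt : ℝ → RVec n) (A : ℝ → ℝ),
      IsRigid n δ (Set.Icc u (∑ j, c j)) Pt ∧
      Set.MapsTo A (Set.Icc u (∑ j, c j)) (Set.Icc u v) ∧
      Set.SurjOn A (Set.Icc u (∑ j, c j)) (Set.Icc u v) ∧
      (∀ q ∈ Set.Icc u v,
        P q ⟨n - 1, by omega⟩ < P v ⟨n - 1, by omega⟩ → Pt q = P q ∧ A q = q) ∧
      Pt (∑ j, c j) = c ∧
      (∀ q ∈ Set.Icc u (∑ j, c j), ∀ j,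
        0 ≤ Pt q j - P (A q) j ∧ Pt q j - P (A q) j ≤ c j - P v j) := by
  haveI : NeZero n := ⟨by omega⟩
  have hP0 : IsNSystem n (Set.Icc u v) P := hP.1.1
  have hw : ExtendRigid.bb u v P c 0 = ∑ j, c j := ExtendRigid.bb_zero hP0 huv
  have hvw : v ≤ ExtendRigid.bb u v P c 0 := by
    rw [hw]; exact ExtendRigid.v_le_w hP0 huv hPc
  have huw : u < ExtendRigid.bb u v P c 0 := lt_of_lt_of_le huv hvw
  rw [← hw]
  refine ⟨ExtendRigid.Ptt u v P c, ExtendRigid.AA u v P c, ⟨⟨?_, ?_, ?_, ?_⟩, ?_⟩,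
    ?_, ?_, ?_, ?_, ?_⟩
  · -- IsNonDegenerate
    refine ⟨?_, ?_, ?_, ?_⟩
    · intro x hx
      exact le_trans (le_of_lt hu) hx.1
    · exact Set.ordConnected_Icc
    · rw [interior_Icc]
      exact ⟨(u + v) / 2, by constructor <;> [linarith; linarith]⟩
    · intro q hq
      refine ⟨ExtendRigid.Ptt_S1 hP0 huv hPc hc hq, ?_⟩
      exact ExtendRigid.Ptt_S2 hP huv hPc hq
  · exact isClosed_Icc
  · intro x hx
    exact lt_of_lt_of_le hu hx.1
  · intro q hsw
    have h := ExtendRigid.Ptt_switch hP hδ huv hPc hc hcδ hsw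
    exact ⟨h.1, h.2.1⟩
  · intro q hsw
    exact (ExtendRigid.Ptt_switch hP hδ huv hPc hc hcδ hsw).2.2
  · -- MapsTo
    intro q hq
    exact ExtendRigid.AA_mapsto hP0 huv hPc hq.1
  · -- SurjOn
    intro y hy
    have hTne : (Finset.univ.filter (fun i : Fin n => y ≤ ExtendRigid.rho u v P i)).Nonempty :=
      ⟨0, Finset.mem_filter.mpr ⟨Finset.mem_univ _,
        by rw [ExtendRigid.rho_zero hP0 huv]; exact hy.2⟩⟩
    obtain ⟨i₃, hi₃⟩ : ∃ x, x = Finset.max' _ hTne := ⟨_, rfl⟩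
    have hyge : y ≤ ExtendRigid.rho u v P i₃ := by
      have h := Finset.max'_mem _ hTne
      rw [← hi₃] at h
      exact (Finset.mem_filter.mp h).2
    have hlt : ∀ j, i₃ < j → ExtendRigid.rho u v P j < y := by
      intro j hj
      by_contra hh
      push_neg at hh
      have hjT := Finset.le_max' (Finset.univ.filter (fun i : Fin n => y ≤ ExtendRigid.rho u v P i)) j
        (Finset.mem_filter.mpr ⟨Finset.mem_univ j, hh⟩)
      rw [← hi₃] at hjT
      exact absurd hjT (not_le.mpr hj)
    refine ⟨y + ExtendRigid.SS v P c i₃, ⟨?_, ?_⟩, ?_⟩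
    · have := ExtendRigid.SS_nonneg (v := v) (P := P) hPc i₃
      linarith [hy.1]
    · have h1 : y + ExtendRigid.SS v P c i₃ ≤ ExtendRigid.aa u v P c i₃ := by
        rw [ExtendRigid.aa]; linarith
      refine le_trans h1 (le_trans (ExtendRigid.aa_le_bb hPc i₃) ?_)
      exact ExtendRigid.bb_anti hPc (by rw [Fin.le_def]; simp)
    · have hb : ∀ j, i₃ < j → ExtendRigid.bb u v P c j ≤ y + ExtendRigid.SS v P c i₃ := by
        intro j hj
        have hsucc : i₃.1 + 1 < n := by have := j.2; rw [Fin.lt_def] at hj; omega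
        have hj₀ : (⟨i₃.1 + 1, hsucc⟩ : Fin n) ≤ j := by
          rw [Fin.le_def]; rw [Fin.lt_def] at hj; simp; omega
        have h1 : ExtendRigid.bb u v P c j ≤ ExtendRigid.bb u v P c ⟨i₃.1 + 1, hsucc⟩ :=
          ExtendRigid.bb_anti hPc hj₀
        have h2 : ExtendRigid.bb u v P c ⟨i₃.1 + 1, hsucc⟩ =
            ExtendRigid.rho u v P ⟨i₃.1 + 1, hsucc⟩ + ExtendRigid.SS v P c i₃ := by
          rw [ExtendRigid.bb_eq]
          congr 1
          rw [ExtendRigid.SS, ExtendRigid.Ioi_eq_Ici_succ i₃ hsucc]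
        have h3 : ExtendRigid.rho u v P ⟨i₃.1 + 1, hsucc⟩ < y :=
          hlt _ (by rw [Fin.lt_def]; simp)
        linarith
      have ha : y + ExtendRigid.SS v P c i₃ ≤ ExtendRigid.aa u v P c i₃ := by
        rw [ExtendRigid.aa]; linarith
      rw [ExtendRigid.AA_replay hP0 huv hPc hb ha]
      ring
  · -- (i): agreement below the last increase of the top coordinate
    intro q hq hlt
    have hn0 := Nat.pos_of_ne_zero (NeZero.ne n)
    obtain ⟨ilast, hilast⟩ : ∃ x : Fin n, x = ⟨n - 1, by omega⟩ := ⟨_, rfl⟩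
    have hqs : q < ExtendRigid.sig u v P ilast := by
      by_contra hh
      push_neg at hh
      have := (ExtendRigid.sig_facts hP0 huv ilast).2.2.1 q hq hh
      rw [hilast] at this
      rw [this] at hlt
      exact lt_irrefl _ hlt
    have hb : ∀ j : Fin n, ilast < j → ExtendRigid.bb u v P c j ≤ q := by
      intro j hj
      rw [hilast] at hj
      exact (ExtendRigid.no_gt_last j hj).elim
    have hS0 : ExtendRigid.SS v P c ilast = 0 :=
      ExtendRigid.SS_last ilast (by rw [hilast]; simp; omega)
    have ha : q ≤ ExtendRigid.aa u v P c ilast := by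
      rw [ExtendRigid.aa, hS0]
      have := ExtendRigid.sig_le_rho (u := u) (v := v) (P := P) (le_refl ilast)
      linarith
    have hAq : ExtendRigid.AA u v P c q = q := by
      rw [ExtendRigid.AA_replay hP0 huv hPc hb ha, hS0]
      ring
    constructor
    · funext j
      rw [ExtendRigid.Ptt_replay hP0 huv hPc hb ha j, hS0]
      rw [if_neg (fun hh => ExtendRigid.no_gt_last j (hilast ▸ hh))]
      norm_num
    · exact hAq
  · -- (ii)
    exact ExtendRigid.Ptt_at_w hP0 huv hPc
  · -- (iii)
    intro q hq j
    have he : ExtendRigid.Ptt u v P c q j - P (ExtendRigid.AA u v P c q) j =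
        ExtendRigid.cl u v P c q j := by
      show P (ExtendRigid.AA u v P c q) j + ExtendRigid.cl u v P c q j -
        P (ExtendRigid.AA u v P c q) j = ExtendRigid.cl u v P c q j
      ring
    rw [he]
    refine ⟨ExtendRigid.cl_nonneg hPc q j, ?_⟩
    have h1 := ExtendRigid.cl_le_DD (u := u) hPc q j
    rw [ExtendRigid.DD] at h1
    exact h1
end
end

section
/- Let n ≥ 2, let δ > 0, let R be a proper rigid n-system of mesh δ, and let x ∈ F(R, e_1). For any ε_1 > 0, ε_2 > 0 and any Q > 0, there exist positive multiples u and v of δ with Q < u < v and a rigid n-system P : [u, v] → Δ_n of mesh δ such that, writing e = (1, …, 1) ∈ ℝ^n and with inequalities between vectors meant coordinatewise: (i) the right derivative of P at u equals e_1; (ii) (1 + 3nε_1)^{-1}(x + ε_1 e) ≤ u^{-1}P(u) ≤ x + 4ε_1 e; (iii) x − 2ε_2 e ≤ v^{-1}P(v) ≤ x + 2ε_2 e; (iv) dist(F(R), E) ≤ 4(n + 1)ε_1, where E = {q^{-1}P(q) : q ∈ [u, v]}. -/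
open Filter Set Pointwise Topology

noncomputable section

section Aux

variable {n : ℕ}

lemma shift_eq (B E : RVec n) (r r' : ℝ) :
    B + r • E = (B + r' • E) + (r - r') • E := by
  funext m
  simp only [Pi.add_apply, Pi.smul_apply, smul_eq_mul]
  ring

lemma shift_eq' (B E : RVec n) (r r' s : ℝ) (h : r = r' + s) :
    B + r • E = (B + r' • E) + s • E := by
  subst h
  funext m
  simp only [Pi.add_apply, Pi.smul_apply, smul_eq_mul]
  ring

lemma sys_coord_bounds {I : Set ℝ} {R : ℝ → RVec n} (hsys : IsNSystem n I R)
    {s : ℝ} (hs : s ∈ I) (m : Fin n) : 0 ≤ R s m ∧ R s m ≤ s := by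
  obtain ⟨h0, hmono, hsum⟩ := (hsys.2.2.2 s hs).1
  refine ⟨h0 m, ?_⟩
  calc R s m ≤ ∑ i, R s i := Finset.single_le_sum (fun i _ => h0 i) (Finset.mem_univ m)
  _ = s := hsum

lemma traj_coord_bounds {I : Set ℝ} {R : ℝ → RVec n} (hsys : IsNSystem n I R)
    (hIpos : I ⊆ Set.Ioi (0:ℝ)) {s : ℝ} (hs : s ∈ I) (m : Fin n) :
    0 ≤ s⁻¹ * R s m ∧ s⁻¹ * R s m ≤ 1 := by
  have hspos : (0:ℝ) < s := hIpos hs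
  obtain ⟨h0, h1⟩ := sys_coord_bounds hsys hs m
  constructor
  · positivity
  · rw [inv_mul_le_iff₀ hspos]
    simpa using h1

lemma traj_mem_K {I : Set ℝ} {R : ℝ → RVec n} (hsys : IsNSystem n I R)
    (hIpos : I ⊆ Set.Ioi (0:ℝ)) {s : ℝ} (hs : s ∈ I) :
    (s⁻¹ • R s) ∈ Set.univ.pi (fun _ : Fin n => Set.Icc (0:ℝ) 1) := by
  intro m _
  obtain ⟨h0, h1⟩ := traj_coord_bounds hsys hIpos hs m
  exact ⟨h0, h1⟩

lemma FSet_subset_K {I : Set ℝ} {R : ℝ → RVec n} (hsys : IsNSystem n I R)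
    (hIpos : I ⊆ Set.Ioi (0:ℝ)) :
    FSet n I R ⊆ Set.univ.pi (fun _ : Fin n => Set.Icc (0:ℝ) 1) := by
  intro y hy
  obtain ⟨q, hqI, _, _, hconv⟩ := hy
  have hcl : IsClosed (Set.univ.pi (fun _ : Fin n => Set.Icc (0:ℝ) 1)) :=
    isClosed_set_pi (fun i _ => isClosed_Icc)
  exact hcl.mem_of_tendsto hconv
    (Filter.Eventually.of_forall (fun i => traj_mem_K hsys hIpos (hqI i)))

/-- Every far-enough trajectory point is close to the limit set `F(R)`. -/
lemma eventually_near_FSet {I : Set ℝ} {R : ℝ → RVec n} (hsys : IsNSystem n I R)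
    (hIpos : I ⊆ Set.Ioi (0:ℝ)) {ε : ℝ} (hε : 0 < ε) :
    ∃ A : ℝ, ∀ s, s ∈ I → A ≤ s → ∃ y ∈ FSet n I R, dist (s⁻¹ • R s) y < ε := by
  by_contra hcon
  push_neg at hcon
  choose f hfI hfge hfbad using hcon
  set g : ℝ → ℝ := fun z => f (z + 1) with hg
  set t : ℕ → ℝ := fun k => g^[k] (f 1) with ht2
  have htsucc : ∀ k, t (k+1) = f (t k + 1) := by
    intro k
    simp only [ht2, Function.iterate_succ_apply']
    rfl
  have ht0 : t 0 = f 1 := rfl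
  have htI : ∀ k, t k ∈ I := by
    intro k
    cases k with
    | zero => rw [ht0]; exact hfI 1
    | succ k => rw [htsucc]; exact hfI _
  have htge : ∀ k, t k + 1 ≤ t (k+1) := by
    intro k; rw [htsucc]; exact hfge _
  have htmono : StrictMono t := by
    apply strictMono_nat_of_lt_succ
    intro k
    have := htge k
    linarith
  have htlb : ∀ k : ℕ, (k : ℝ) ≤ t k := by
    intro k
    induction k with
    | zero =>
      have h1 : (1:ℝ) ≤ f 1 := hfge 1
      rw [ht0]; push_cast; linarith
    | succ k ih =>
      have h2 := htge k
      push_cast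
      linarith
  have httop : Tendsto t atTop atTop :=
    tendsto_atTop_mono htlb tendsto_natCast_atTop_atTop
  have hbad : ∀ k, ∀ y ∈ FSet n I R, ε ≤ dist ((t k)⁻¹ • R (t k)) y := by
    intro k
    cases k with
    | zero => rw [ht0]; exact hfbad 1
    | succ k => rw [htsucc]; exact hfbad _
  have hK : IsCompact (Set.univ.pi (fun _ : Fin n => Set.Icc (0:ℝ) 1)) :=
    isCompact_univ_pi (fun _ => isCompact_Icc)
  obtain ⟨y, _, φ, hφ, hconv⟩ :=
    hK.tendsto_subseq (fun k => traj_mem_K hsys hIpos (htI k))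
  have hyF : y ∈ FSet n I R := by
    refine ⟨t ∘ φ, fun k => htI _, htmono.comp hφ, ?_, hconv⟩
    apply tendsto_atTop_mono (fun k => ?_) tendsto_natCast_atTop_atTop
    calc (k:ℝ) ≤ (φ k : ℝ) := by exact_mod_cast Nat.cast_le.2 (hφ.id_le k)
    _ ≤ t (φ k) := htlb _
  obtain ⟨k, hk⟩ := (Metric.tendsto_nhds.mp hconv ε hε).exists
  exact absurd hk (not_lt.2 (hbad (φ k) y hyF))

/-- finite ε-net realization: trajectory points in a bounded window approximate
all of `F(R)`. -/
lemma net_FSet {I : Set ℝ} {R : ℝ → RVec n} (hsys : IsNSystem n I R)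
    (hIpos : I ⊆ Set.Ioi (0:ℝ)) {ε : ℝ} (hε : 0 < ε) (a0 : ℝ) :
    ∃ b0 : ℝ, ∀ y ∈ FSet n I R, ∃ s, s ∈ I ∧ a0 ≤ s ∧ s ≤ b0 ∧
      dist (s⁻¹ • R s) y ≤ ε := by
  have hK : IsCompact (Set.univ.pi (fun _ : Fin n => Set.Icc (0:ℝ) 1)) :=
    isCompact_univ_pi (fun _ => isCompact_Icc)
  have htb : TotallyBounded (FSet n I R) :=
    TotallyBounded.subset (FSet_subset_K hsys hIpos) hK.totallyBounded
  obtain ⟨T, hTfin, hTcov⟩ := (Metric.totallyBounded_iff.mp htb) (ε/3) (by linarith)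
  have Hz : ∀ z : RVec n, ∃ s : ℝ,
      (∃ y ∈ FSet n I R, dist y z < ε/3) →
      (s ∈ I ∧ a0 ≤ s ∧ ∃ y ∈ FSet n I R, dist y z < ε/3 ∧
        dist (s⁻¹ • R s) y ≤ ε/3) := by
    intro z
    by_cases h : ∃ y ∈ FSet n I R, dist y z < ε/3
    · obtain ⟨y, hyF, hyz⟩ := h
      obtain ⟨qs, hq1, hq2, hq3, hq4⟩ := hyF
      have hev := (hq3.eventually_ge_atTop a0).and
        (Metric.tendsto_nhds.mp hq4 (ε/3) (by linarith))
      obtain ⟨k, hk1, hk2⟩ := hev.exists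
      exact ⟨qs k, fun _ => ⟨hq1 k, hk1, y, ⟨qs, hq1, hq2, hq3, hq4⟩, hyz, le_of_lt hk2⟩⟩
    · exact ⟨0, fun hc => absurd hc h⟩
  choose sf hsf using Hz
  obtain ⟨b0, hb0⟩ := (hTfin.image sf).bddAbove
  refine ⟨b0, ?_⟩
  intro y hyF
  have hyb := hTcov hyF
  rw [Set.mem_iUnion₂] at hyb
  obtain ⟨z, hzT, hyz⟩ := hyb
  have hyz' : dist y z < ε/3 := by rwa [Metric.mem_ball] at hyz
  obtain ⟨hsI, hsa, y', hy'F, hy'z, hdist⟩ := hsf z ⟨y, hyF, hyz'⟩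
  refine ⟨sf z, hsI, hsa, hb0 (Set.mem_image_of_mem sf hzT), ?_⟩
  have h4 : dist ((sf z)⁻¹ • R (sf z)) y ≤
      dist ((sf z)⁻¹ • R (sf z)) y' + dist y' z + dist z y := dist_triangle4 _ _ _ _
  have h5 : dist z y = dist y z := dist_comm _ _
  linarith

end Aux

section Base

/-- From a point `c ∈ I` with right slope `e₁`, find a δ-multiple `a ≤ c` close to `c`
at which all coordinates of `R` are positive, distinct δ-multiples, and such that `R`
is linear with slope `e₁` on `[a, c + εc]`. -/
lemma exists_base {n : ℕ} (hn : 2 ≤ n) {δ : ℝ} (hδ : 0 < δ) {I : Set ℝ}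
    {R : ℝ → RVec n} (hR : IsRigid n δ I R) {c : ℝ} (hcI : c ∈ I)
    {εc : ℝ} (hεc : 0 < εc)
    (hslope : ∀ t ∈ I ∩ Set.Icc c (c + εc), R t = R c + (t - c) • eVec n 0) :
    ∃ a, a ∈ I ∧ (∃ A : ℤ, a = δ * A) ∧ a ≤ c ∧ c < a + 2*δ ∧
      (∀ m, ∃ z : ℤ, R a m = δ * z) ∧ (∀ m, 0 < R a m) ∧ StrictMono (R a) ∧
      (∀ t ∈ I ∩ Set.Icc a (c + εc), R t = R a + (t - a) • eVec n 0) := by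
  obtain ⟨⟨hsys, hIcl, hIpos, hndeg⟩, hrig⟩ := hR
  obtain ⟨hI0, hOrd, hintNe, hS⟩ := hsys
  set S : Set ℝ :=
    {t | t ∈ I ∧ t ≤ c ∧ ∀ s ∈ Set.Icc t c, R s = R c + (s - c) • eVec n 0} with hSdef
  have hcS : c ∈ S := by
    refine ⟨hcI, le_refl _, ?_⟩
    intro s hs
    have hsc : s = c := le_antisymm hs.2 hs.1
    subst hsc
    funext m; simp
  have hSne : S.Nonempty := ⟨c, hcS⟩
  have hSI : S ⊆ I := fun t ht => ht.1
  have hSbdd : BddBelow S := ⟨0, fun t ht => le_of_lt (hIpos (hSI ht))⟩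
  set a0 := sInf S with ha0def
  have ha0c : a0 ≤ c := csInf_le hSbdd hcS
  have ha0lbS : ∀ t ∈ S, a0 ≤ t := fun t ht => csInf_le hSbdd ht
  have hlin_gt : ∀ s, a0 < s → s ≤ c → s ∈ I ∧ R s = R c + (s - c) • eVec n 0 := by
    intro s hs hsc
    obtain ⟨t, htS, hts⟩ := exists_lt_of_csInf_lt hSne hs
    exact ⟨hOrd.out htS.1 hcI ⟨le_of_lt hts, hsc⟩, htS.2.2 s ⟨le_of_lt hts, hsc⟩⟩
  have ha0I : a0 ∈ I := by
    have hcl : a0 ∈ closure S := by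
      rw [Metric.mem_closure_iff]
      intro r hr
      obtain ⟨t, htS, hts⟩ := exists_lt_of_csInf_lt hSne (by linarith : a0 < a0 + r)
      refine ⟨t, htS, ?_⟩
      have h1 : a0 ≤ t := ha0lbS t htS
      rw [Real.dist_eq, abs_sub_comm, abs_of_nonneg (by linarith)]
      linarith
    have h2 : a0 ∈ closure I := closure_mono hSI hcl
    rwa [hIcl.closure_eq] at h2
  have ha0pos : 0 < a0 := hIpos ha0I
  -- value of R at a0
  have hRa0 : R a0 = R c + (a0 - c) • eVec n 0 := by
    rcases eq_or_lt_of_le ha0c with heq | hlt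
    · rw [heq]; funext m; simp
    · obtain ⟨_, ε, hε, k, ℓ, hL, hRt, _⟩ := hS a0 ha0I
      set d := min ε (c - a0) with hd
      have hdpos : 0 < d := lt_min hε (by linarith)
      have hdε : d ≤ ε := min_le_left _ _
      have hdc : d ≤ c - a0 := min_le_right _ _
      have key : ∀ w, 0 < w → w ≤ d →
          R (a0 + w) = R a0 + w • eVec n k ∧
          R (a0 + w) = R c + (a0 + w - c) • eVec n 0 := by
        intro w hw hwd
        have hwc : a0 + w ≤ c := by linarith
        have hmem := hlin_gt (a0 + w) (by linarith) hwc
        have h1 : R (a0 + w) = R a0 + (a0 + w - a0) • eVec n k :=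
          hRt (a0 + w) ⟨hmem.1, ⟨by linarith, by linarith⟩⟩
        refine ⟨?_, hmem.2⟩
        rw [h1]; ring_nf
      obtain ⟨k11, k12⟩ := key d hdpos (le_refl d)
      obtain ⟨k21, k22⟩ := key (d/2) (by linarith) (by linarith)
      funext m
      have e1 := congrFun k11 m
      have e2 := congrFun k21 m
      have e3 := congrFun k12 m
      have e4 := congrFun k22 m
      simp only [Pi.add_apply, Pi.smul_apply, smul_eq_mul] at e1 e2 e3 e4 ⊢
      have h5 : (d/2) * eVec n (↑k) m = (d/2) * eVec n 0 m := by
        linear_combination e2 - e1 + e3 - e4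
      have hE := mul_left_cancel₀ (ne_of_gt (by linarith : (0:ℝ) < d/2)) h5
      linear_combination e3 - e1 - d * hE
  -- linearity on [a0, c+εc], based at a0
  have hlinA : ∀ t ∈ I ∩ Set.Icc a0 (c + εc),
      R t = R a0 + (t - a0) • eVec n 0 := by
    rintro t ⟨htI, ht1, ht2⟩
    have hlinC : R t = R c + (t - c) • eVec n 0 := by
      rcases le_or_gt t c with hc1 | hc1
      · rcases eq_or_lt_of_le ht1 with he | he
        · rw [← he, hRa0]
        · exact (hlin_gt t he hc1).2
      · exact hslope t ⟨htI, le_of_lt hc1, ht2⟩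
    rw [hlinC, hRa0]
    exact shift_eq' (R c) (eVec n 0) (t - c) (a0 - c) (t - a0) (by ring)
  -- a0 is a switch number of R
  have hswitch : IsSwitchNumber n I R a0 := by
    refine ⟨ha0I, ?_⟩
    by_cases hf : a0 ∈ frontier I
    · exact Or.inl hf
    · have hint : a0 ∈ interior I := by
        by_contra hni
        exact hf (by rw [hIcl.frontier_eq]; exact ⟨ha0I, hni⟩)
      obtain ⟨ρ, hρ, hball⟩ := Metric.isOpen_iff.mp isOpen_interior a0 hint
      obtain ⟨_, ε, hε, k, ℓ, hL, hRt, _⟩ := hS a0 ha0I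
      set w := min (min ε (ρ/2)) (c + εc - a0) with hw
      have hwpos : 0 < w := by
        apply lt_min (lt_min hε (by linarith))
        linarith
      have hwε : w ≤ ε := le_trans (min_le_left _ _) (min_le_left _ _)
      have hwρ : w ≤ ρ/2 := le_trans (min_le_left _ _) (min_le_right _ _)
      have hwc : w ≤ c + εc - a0 := min_le_right _ _
      have htI : a0 + w ∈ I := by
        apply interior_subset
        apply hball
        rw [Metric.mem_ball, Real.dist_eq]
        have h9 : a0 + w - a0 = w := by ring
        rw [h9, abs_of_nonneg (le_of_lt hwpos)]
        linarith
      have h1 : R (a0 + w) = R a0 + (a0 + w - a0) • eVec n k :=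
        hRt (a0 + w) ⟨htI, ⟨by linarith, by linarith⟩⟩
      have h2 : R (a0 + w) = R a0 + (a0 + w - a0) • eVec n 0 :=
        hlinA (a0 + w) ⟨htI, ⟨by linarith, by linarith⟩⟩
      have hEk : eVec n (↑k) = eVec n 0 := by
        funext m
        have e1 := congrFun h1 m
        have e2 := congrFun h2 m
        simp only [Pi.add_apply, Pi.smul_apply, smul_eq_mul] at e1 e2
        have h5 : w * eVec n (↑k) m = w * eVec n 0 m := by linear_combination e2 - e1
        exact mul_left_cancel₀ (ne_of_gt hwpos) h5
      have hk0 : (k : ℕ) = 0 := by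
        by_contra hne
        have h6 := congrFun hEk k
        norm_num [eVec, hne] at h6
      have hlne : (ℓ : ℕ) ≠ 0 := by
        intro h0
        have hEl : eVec n (↑ℓ) = eVec n 0 := by rw [h0]
        have ht'I : a0 - w ∈ I := by
          apply interior_subset
          apply hball
          rw [Metric.mem_ball, Real.dist_eq]
          have h9 : a0 - w - a0 = -w := by ring
          rw [h9, abs_neg, abs_of_nonneg (le_of_lt hwpos)]
          linarith
        have ht'S : a0 - w ∈ S := by
          refine ⟨ht'I, by linarith, ?_⟩
          intro s hs
          rcases le_or_gt a0 s with hcase | hcase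
          · have h8 := hlinA s ⟨hOrd.out ha0I hcI ⟨hcase, hs.2⟩, hcase, by linarith [hs.2]⟩
            rw [h8, hRa0]
            exact (shift_eq' (R c) (eVec n 0) (s - c) (a0 - c) (s - a0) (by ring)).symm
          · have hsI : s ∈ I := hOrd.out ht'I ha0I ⟨hs.1, le_of_lt hcase⟩
            have h6 : R s = R a0 + (s - a0) • eVec n (↑ℓ) :=
              hL s ⟨hsI, ⟨by linarith [hs.1], le_of_lt hcase⟩⟩
            rw [hEl] at h6
            rw [h6, hRa0]
            exact (shift_eq' (R c) (eVec n 0) (s - c) (a0 - c) (s - a0) (by ring)).symm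
        have h7 := ha0lbS _ ht'S
        linarith
      refine Or.inr ⟨hint, ε, hε, k, ℓ, ?_, hL, hRt⟩
      rw [Fin.lt_def, hk0]
      exact Nat.pos_of_ne_zero hlne
  have hvals := hrig a0 hswitch
  obtain ⟨ha0posvals, ha0strict⟩ := hndeg a0 hswitch
  have ha0mult : ∃ A : ℤ, a0 = δ * A := by
    choose z hz using hvals
    refine ⟨∑ m, z m, ?_⟩
    have hsum := (hS a0 ha0I).1.2.2
    have h7 : ∑ m, R a0 m = δ * ((∑ m, z m : ℤ) : ℝ) := by
      rw [Finset.sum_congr rfl (fun m _ => hz m), ← Finset.mul_sum]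
      push_cast
      ring
    rw [← hsum, h7]
  obtain ⟨A0, hA0⟩ := ha0mult
  have i0lt : (0:ℕ) < n := by omega
  have i1lt : (1:ℕ) < n := by omega
  set i0 : Fin n := ⟨0, i0lt⟩ with hi0
  set i1 : Fin n := ⟨1, i1lt⟩ with hi1
  have hi0v : (i0:ℕ) = 0 := rfl
  have hi1v : (i1:ℕ) = 1 := rfl
  have hi01 : i0 < i1 := by rw [Fin.lt_def, hi0v, hi1v]; omega
  -- the δ-multiple just below c
  have ha1c : δ * (⌊c / δ⌋ : ℝ) ≤ c := by
    have h := Int.floor_le (c/δ)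
    have h2 := mul_le_mul_of_nonneg_left h (le_of_lt hδ)
    calc δ * (⌊c/δ⌋ : ℝ) ≤ δ * (c/δ) := h2
    _ = c := by field_simp
  have hca1 : c < δ * (⌊c / δ⌋ : ℝ) + δ := by
    have h := Int.lt_floor_add_one (c/δ)
    have h2 := mul_lt_mul_of_pos_left h hδ
    calc c = δ * (c/δ) := by field_simp
    _ < δ * ((⌊c/δ⌋ : ℝ) + 1) := h2
    _ = δ * (⌊c/δ⌋ : ℝ) + δ := by ring
  set a2 := max a0 (δ * (⌊c / δ⌋ : ℝ)) with ha2def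
  have ha2c : a2 ≤ c := max_le ha0c ha1c
  have ha2a0 : a0 ≤ a2 := le_max_left _ _
  have ha2I : a2 ∈ I := hOrd.out ha0I hcI ⟨ha2a0, ha2c⟩
  have hca2 : c < a2 + δ := lt_of_lt_of_le hca1 (by
    have := le_max_right a0 (δ * (⌊c / δ⌋ : ℝ)); linarith)
  have ha2mult : ∃ A : ℤ, a2 = δ * A := by
    rcases max_choice a0 (δ * (⌊c / δ⌋ : ℝ)) with h | h <;> rw [ha2def, h]
    exacts [⟨A0, hA0⟩, ⟨⌊c/δ⌋, rfl⟩]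
  -- coordinate formula on [a0, c+εc]
  have hcoord : ∀ t, t ∈ I → a0 ≤ t → t ≤ c + εc →
      ∀ m : Fin n, R t m = R a0 m + (t - a0) * (if (m:ℕ) = 0 then 1 else 0) := by
    intro t h1 h2 h3 m
    have h4 := congrFun (hlinA t ⟨h1, h2, h3⟩) m
    simpa [eVec] using h4
  -- the finisher
  have finisher : ∀ a : ℝ, a ∈ I → (∃ A : ℤ, a = δ * A) → a0 ≤ a → a ≤ c →
      c < a + 2*δ → R a i0 < R a i1 →
      ∃ a, a ∈ I ∧ (∃ A : ℤ, a = δ * A) ∧ a ≤ c ∧ c < a + 2*δ ∧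
      (∀ m, ∃ z : ℤ, R a m = δ * z) ∧ (∀ m, 0 < R a m) ∧ StrictMono (R a) ∧
      (∀ t ∈ I ∩ Set.Icc a (c + εc), R t = R a + (t - a) • eVec n 0) := by
    rintro a haI ⟨A, hA⟩ ha0a hac hca hstrict01
    have hcoorda : ∀ m : Fin n,
        R a m = R a0 m + (a - a0) * (if (m:ℕ) = 0 then 1 else 0) :=
      hcoord a haI ha0a (by linarith)
    choose z hz using hvals
    refine ⟨a, haI, ⟨A, hA⟩, hac, hca, ?_, ?_, ?_, ?_⟩
    · intro m
      by_cases hm : (m:ℕ) = 0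
      · refine ⟨z m + (A - A0), ?_⟩
        rw [hcoorda m, if_pos hm, hz m, hA, hA0]
        push_cast
        ring
      · refine ⟨z m, ?_⟩
        rw [hcoorda m, if_neg hm, hz m]
        ring
    · intro m
      have h1 := hcoorda m
      have h2 : (0:ℝ) ≤ (a - a0) * (if (m:ℕ) = 0 then 1 else 0) := by
        have h3 : a0 ≤ a := ha0a
        split <;> nlinarith
      have h4 := ha0posvals m
      rw [h1]
      linarith
    · intro i j hij
      have hijn : (i:ℕ) < (j:ℕ) := hij
      by_cases hi : (i:ℕ) = 0
      · have hii0 : i = i0 := Fin.ext (by rw [hi, hi0v])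
        rcases eq_or_lt_of_le (show (1:ℕ) ≤ (j:ℕ) by omega) with he | hl
        · have hji1 : j = i1 := Fin.ext (by rw [← he, hi1v])
          rw [hii0, hji1]; exact hstrict01
        · have hj1 : R a i1 < R a j := by
            have h1 := hcoorda i1
            have h2 := hcoorda j
            rw [if_neg (by rw [hi1v]; omega)] at h1
            rw [if_neg (by omega)] at h2
            have h3 := ha0strict (show i1 < j by rw [Fin.lt_def, hi1v]; exact hl)
            rw [h1, h2]; linarith
          rw [hii0]; exact lt_trans hstrict01 hj1
      · have h1 := hcoorda i
        have h2 := hcoorda j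
        rw [if_neg hi] at h1
        rw [if_neg (by omega)] at h2
        have h3 := ha0strict hij
        rw [h1, h2]
        linarith
    · rintro t ⟨htI, ht1, ht2⟩
      have h5 := hlinA t ⟨htI, le_trans ha0a ht1, ht2⟩
      rw [h5]
      have ha' : R a = R a0 + (a - a0) • eVec n 0 :=
        hlinA a ⟨haI, ha0a, by linarith⟩
      rw [ha']
      exact shift_eq' (R a0) (eVec n 0) (t - a0) (a - a0) (t - a) (by ring)
  -- choose a
  have hmono2 : R a2 i0 ≤ R a2 i1 :=
    (hS a2 ha2I).1.2.1 (le_of_lt hi01)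
  by_cases hcase : R a2 i0 < R a2 i1
  · exact finisher a2 ha2I ha2mult ha2a0 ha2c (by linarith) hcase
  · have heq01 : R a2 i0 = R a2 i1 := le_antisymm hmono2 (not_lt.1 hcase)
    obtain ⟨A2, hA2⟩ := ha2mult
    have ha0a2 : a0 < a2 := by
      rcases eq_or_lt_of_le ha2a0 with he | hl
      · exfalso
        have h3 := ha0strict hi01
        rw [he] at h3
        exact hcase h3
      · exact hl
    have hA02 : A0 < A2 := by
      have h1 : δ * (A0:ℝ) < δ * (A2:ℝ) := by rw [← hA0, ← hA2]; exact ha0a2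
      have h2 : (A0:ℝ) < (A2:ℝ) := lt_of_mul_lt_mul_left h1 (le_of_lt hδ)
      exact_mod_cast h2
    have hstep : a0 ≤ a2 - δ := by
      have hcast : (A0:ℝ) + 1 ≤ (A2:ℝ) := by exact_mod_cast hA02
      have h1 : δ * ((A0:ℝ) + 1) ≤ δ * (A2:ℝ) := by nlinarith
      rw [hA0, hA2]
      nlinarith
    have haI' : a2 - δ ∈ I := hOrd.out ha0I hcI ⟨hstep, by linarith⟩
    have hc1 : R (a2 - δ) i0 = R a2 i0 - δ := by
      have h1 := hcoord (a2 - δ) haI' hstep (by linarith) i0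
      have h2 := hcoord a2 ha2I ha2a0 (by linarith) i0
      rw [if_pos hi0v] at h1 h2
      rw [h1, h2]; ring
    have hc2 : R (a2 - δ) i1 = R a2 i1 := by
      have h1 := hcoord (a2 - δ) haI' hstep (by linarith) i1
      have h2 := hcoord a2 ha2I ha2a0 (by linarith) i1
      rw [if_neg (by rw [hi1v]; omega)] at h1 h2
      rw [h1, h2]; ring
    refine finisher (a2 - δ) haI' ⟨A2 - 1, by rw [hA2]; push_cast; ring⟩ hstep
      (by linarith) (by linarith) ?_
    rw [hc1, hc2, ← heq01]
    linarith

end Base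

section Arith

lemma traj_to_prod {c Rc x r : ℝ} (hc : 0 < c) (h : |c⁻¹ * Rc - x| ≤ r) :
    c*(x - r) ≤ Rc ∧ Rc ≤ c*(x + r) := by
  rw [abs_le] at h
  have h3 : c * (c⁻¹ * Rc) = Rc := by field_simp
  constructor <;> nlinarith [h.1, h.2, h3, hc]

lemma coord_squeeze {a c Rc Ra x η δ e : ℝ} (hRc1 : c*(x - η/2) ≤ Rc)
    (hRc2 : Rc ≤ c*(x + η/2)) (h2 : Rc = Ra + (c - a)*e) (he : e = 0 ∨ e = 1)
    (hd0 : 0 ≤ c - a) (hd2 : c - a < 2*δ) (hx0 : 0 ≤ x) (hx1 : x ≤ 1)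
    (haη : 4*δ + 2*δ*η ≤ a*η) (hη : 0 < η) (hδ : 0 < δ) :
    a*(x - η) ≤ Ra ∧ Ra ≤ a*(x + η) := by
  rcases he with he | he <;> subst he <;>
    constructor <;> nlinarith [mul_nonneg hd0 hx0, mul_nonneg hd0 hη.le]

lemma lower_ii {n a h x η ε₁ δ Ra : ℝ} (hn2 : 2 ≤ n) (ha : 0 < a)
    (hRa : a*(x - η) ≤ Ra) (hh1 : ε₁*a ≤ h) (hh2 : h ≤ ε₁*a + δ)
    (hδa : δ ≤ ε₁*a) (hηε : η ≤ ε₁) (hηkey : η*(1+3*n*ε₁) ≤ n*ε₁^2)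
    (hx0 : 0 ≤ x) (hε₁ : 0 < ε₁) (hδ : 0 < δ) :
    (x + ε₁)*(a + n*h) ≤ (Ra + h)*(1+3*n*ε₁) := by
  have hnε : 0 ≤ n*ε₁ := by nlinarith
  have e4 : (x+ε₁)*(1+2*n*ε₁) ≤ (x+ε₁-η)*(1+3*n*ε₁) := by
    nlinarith [hηkey, mul_nonneg hx0 hnε]
  have e1 : (x+ε₁)*(a + n*h) ≤ (x+ε₁)*(a*(1+2*n*ε₁)) := by
    have h5 : a + n*h ≤ a*(1+2*n*ε₁) := by nlinarith
    have h6 : 0 ≤ x + ε₁ := by linarith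
    nlinarith
  have e2 : a*((x+ε₁-η)*(1+3*n*ε₁)) ≤ (Ra + h)*(1+3*n*ε₁) := by
    have h7 : a*(x+ε₁-η) ≤ Ra + h := by nlinarith
    have h8 : (0:ℝ) < 1+3*n*ε₁ := by nlinarith
    nlinarith
  have e3 : (x+ε₁)*(a*(1+2*n*ε₁)) ≤ a*((x+ε₁-η)*(1+3*n*ε₁)) := by
    nlinarith [mul_le_mul_of_nonneg_left e4 ha.le]
  linarith

lemma upper_ii {n a h x η ε₁ δ Ra : ℝ} (hn2 : 2 ≤ n) (ha : 0 < a)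
    (hRa : Ra ≤ a*(x + η)) (hh2 : h ≤ ε₁*a + δ) (hδa : δ ≤ ε₁*a)
    (hηε : η ≤ ε₁) (hx0 : 0 ≤ x) (hε₁ : 0 < ε₁) (hδ : 0 < δ) (hh : 0 < h) :
    Ra + h ≤ (x + 4*ε₁)*(a + n*h) := by
  have hnh : 0 ≤ n*h := by nlinarith
  nlinarith [mul_nonneg hx0 hnh, mul_nonneg (by linarith : (0:ℝ) ≤ 4*ε₁) hnh]

lemma lower_iii {n b h x ε₂ Rb : ℝ} (hn2 : 2 ≤ n) (hb : 0 < b)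
    (hRb : b*(x - ε₂) ≤ Rb) (hbh : n*h ≤ ε₂*b) (hx1 : x ≤ 1)
    (hh : 0 < h) (hε₂ : 0 < ε₂) :
    (x - 2*ε₂)*(b + n*h) ≤ Rb + h := by
  have hnh : 0 ≤ n*h := by nlinarith
  nlinarith [mul_nonneg hnh (by linarith : 0 ≤ 1 - x), mul_nonneg (by linarith : (0:ℝ) ≤ 2*ε₂) hnh]

lemma upper_iii {n b h x ε₂ Rb : ℝ} (hn2 : 2 ≤ n) (hb : 0 < b)
    (hRb : Rb ≤ b*(x + ε₂)) (hbh : n*h ≤ ε₂*b) (hx0 : 0 ≤ x)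
    (hh : 0 < h) (hε₂ : 0 < ε₂) :
    Rb + h ≤ (x + 2*ε₂)*(b + n*h) := by
  have hnh : 0 ≤ n*h := by nlinarith
  have hhn : h ≤ n*h := by nlinarith
  nlinarith [mul_nonneg hx0 hnh, mul_nonneg (by linarith : (0:ℝ) ≤ 2*ε₂) hnh]

lemma close_bound {n s h a ε₁ δ Rs : ℝ} (hn2 : 2 ≤ n) (hs : 0 < s) (ha : 0 < a)
    (has : a ≤ s) (hR0 : 0 ≤ Rs) (hRs : Rs ≤ s) (hh : 0 < h)
    (hh2 : h ≤ ε₁*a + δ) (hδa : δ ≤ ε₁*a) (hε₁ : 0 < ε₁) :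
    |(s + n*h)⁻¹ * (Rs + h) - s⁻¹ * Rs| ≤ 2*n*ε₁ := by
  have hq : 0 < s + n*h := by nlinarith
  have hDeq : (s + n*h)⁻¹ * (Rs + h) - s⁻¹ * Rs = h*(s - n*Rs)/(s*(s + n*h)) := by
    field_simp
    ring
  rw [hDeq, abs_div, abs_mul, abs_of_pos hh, abs_of_pos (mul_pos hs hq)]
  rw [div_le_iff₀ (mul_pos hs hq)]
  have hz : |s - n*Rs| ≤ n*s := by
    rw [abs_le]
    constructor <;> nlinarith
  have hha : h ≤ 2*ε₁*a := by linarith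
  have hnh0 : 0 ≤ n*h := by nlinarith
  have e1 : ε₁*a ≤ ε₁*s := mul_le_mul_of_nonneg_left has hε₁.le
  have e2 : 0 ≤ ε₁*(n*h) := mul_nonneg hε₁.le hnh0
  have h2q : h ≤ 2*ε₁*(s+n*h) := by nlinarith [e1, e2]
  have hns : 0 ≤ n*s := by nlinarith
  calc h * |s - n*Rs| ≤ h * (n*s) := mul_le_mul_of_nonneg_left hz hh.le
  _ ≤ (2*ε₁*(s+n*h)) * (n*s) := mul_le_mul_of_nonneg_right h2q hns
  _ = 2*n*ε₁*(s*(s+n*h)) := by ring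

end Arith


set_option maxHeartbeats 2000000 in
/-- **Proposition (refined approximation).** Let `R` be a proper rigid `n`-system of
mesh `δ` and `x ∈ F(R, e₁)`.  For any `ε₁, ε₂ > 0` and any bound `Q > 0` there are
positive multiples `u < v` of `δ` with `Q < u` and a rigid `n`-system
`P : [u,v] → Δ_n` of mesh `δ` with: (i) right derivative `e₁` at `u`;
(ii) `(1+3nε₁)⁻¹(x + ε₁e) ≤ u⁻¹P(u) ≤ x + 4ε₁e`;
(iii) `x − 2ε₂e ≤ v⁻¹P(v) ≤ x + 2ε₂e`;
(iv) `dist(F(R), E) ≤ 4(n+1)ε₁` where `E = {q⁻¹P(q) : q ∈ [u,v]}`. -/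
theorem refined_approximation (n : ℕ) (hn : 2 ≤ n) (δ : ℝ) (hδ : 0 < δ)
    (I : Set ℝ) (R : ℝ → RVec n) (hR : IsRigid n δ I R) (hprop : IsProperSys n I R)
    (x : RVec n) (hx : x ∈ FSetE1 n I R)
    (ε₁ ε₂ Q : ℝ) (hε₁ : 0 < ε₁) (hε₂ : 0 < ε₂) (hQ : 0 < Q) :
    ∃ u v : ℝ, (∃ a : ℕ, 0 < a ∧ u = a * δ) ∧ (∃ b : ℕ, 0 < b ∧ v = b * δ) ∧
      Q < u ∧ u < v ∧
      ∃ P : ℝ → RVec n, IsRigid n δ (Set.Icc u v) P ∧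
        (∃ ε > (0 : ℝ), ∀ t ∈ Set.Icc u v ∩ Set.Icc u (u + ε),
          P t = P u + (t - u) • eVec n 0) ∧
        (∀ i, (1 + 3 * n * ε₁)⁻¹ * (x i + ε₁) ≤ u⁻¹ * P u i ∧
              u⁻¹ * P u i ≤ x i + 4 * ε₁) ∧
        (∀ i, x i - 2 * ε₂ ≤ v⁻¹ * P v i ∧ v⁻¹ * P v i ≤ x i + 2 * ε₂) ∧
        cubeDist n (FSet n I R) {y : RVec n | ∃ q, u ≤ q ∧ q ≤ v ∧ y = q⁻¹ • P q}
          ≤ 4 * (n + 1) * ε₁ := by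
  have hR' := hR
  obtain ⟨⟨hsys, hIcl, hIpos, hndeg⟩, hrig⟩ := hR
  have hsys' : IsNSystem n I R := hsys
  obtain ⟨hI0, hOrd, hintNe, hS⟩ := hsys
  obtain ⟨qs, hqI, hqmono, hqtop, hqslope, hqconv⟩ := hx
  have hn2 : (2:ℝ) ≤ (n:ℝ) := by exact_mod_cast hn
  have hnpos : (0:ℝ) < (n:ℝ) := by linarith
  -- coordinates of x lie in [0,1]
  have hxcoord : ∀ m : Fin n, Tendsto (fun i => (qs i)⁻¹ * R (qs i) m) atTop (𝓝 (x m)) := by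
    intro m
    have h1 := hqconv
    rw [tendsto_pi_nhds] at h1
    have h2 := h1 m
    simpa only [Pi.smul_apply, smul_eq_mul] using h2
  have hx01 : ∀ m, 0 ≤ x m ∧ x m ≤ 1 := by
    intro m
    constructor
    · exact ge_of_tendsto (hxcoord m) (Filter.Eventually.of_forall
        (fun i => (traj_coord_bounds hsys' hIpos (hqI i) m).1))
    · exact le_of_tendsto (hxcoord m) (Filter.Eventually.of_forall
        (fun i => (traj_coord_bounds hsys' hIpos (hqI i) m).2))
  -- the balance parameter η
  set η := min ((n:ℝ)*ε₁^2/(1+3*(n:ℝ)*ε₁)) ε₁ with hηdef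
  have h3n : (0:ℝ) < 1+3*(n:ℝ)*ε₁ := by positivity
  have hηpos : 0 < η := lt_min (by positivity) hε₁
  have hηε₁ : η ≤ ε₁ := min_le_right _ _
  have hηkey : η * (1+3*(n:ℝ)*ε₁) ≤ (n:ℝ)*ε₁^2 := by
    have h1 : η ≤ (n:ℝ)*ε₁^2/(1+3*(n:ℝ)*ε₁) := min_le_left _ _
    calc η * (1+3*(n:ℝ)*ε₁) ≤ ((n:ℝ)*ε₁^2/(1+3*(n:ℝ)*ε₁)) * (1+3*(n:ℝ)*ε₁) := by nlinarith
    _ = (n:ℝ)*ε₁^2 := by field_simp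
  clear_value η
  -- eventual proximity of the trajectory to F(R)
  obtain ⟨AB, hAB⟩ := eventually_near_FSet (n := n) hsys' hIpos hε₁
  -- coordinatewise convergence, uniformly
  have hconv' : ∀ r, 0 < r → ∀ᶠ i in atTop, ∀ m, |(qs i)⁻¹ * R (qs i) m - x m| ≤ r := by
    intro r hr
    filter_upwards [Metric.tendsto_nhds.mp hqconv r hr] with i hi
    intro m
    have h2 := dist_le_pi_dist ((qs i)⁻¹ • R (qs i)) x m
    rw [Real.dist_eq] at h2
    simp only [Pi.smul_apply, smul_eq_mul] at h2
    linarith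
  -- choose the first anchor index i
  set M1 : ℝ := max (max (Q + 2*δ) (AB + 2*δ)) (max (δ/ε₁ + 2*δ) (4*δ/η + 4*δ)) with hM1
  have hM1a : Q + 2*δ ≤ M1 := le_trans (le_max_left _ _) (le_max_left _ _)
  have hM1b : AB + 2*δ ≤ M1 := le_trans (le_max_right _ _) (le_max_left _ _)
  have hM1c : δ/ε₁ + 2*δ ≤ M1 := le_trans (le_max_left _ _) (le_max_right _ _)
  have hM1d : 4*δ/η + 4*δ ≤ M1 := le_trans (le_max_right _ _) (le_max_right _ _)
  clear_value M1
  obtain ⟨i, hiM, hiconv⟩ : ∃ i, M1 ≤ qs i ∧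
      ∀ m, |(qs i)⁻¹ * R (qs i) m - x m| ≤ η/2 := by
    obtain ⟨i, h1, h2⟩ := ((hqtop.eventually_ge_atTop M1).and (hconv' (η/2) (by linarith))).exists
    exact ⟨i, h1, h2⟩
  obtain ⟨εc, hεc, hslopec⟩ := hqslope i
  set c := qs i with hc
  clear_value c
  have hcI : c ∈ I := by rw [hc]; exact hqI i
  have hcpos : 0 < c := hIpos hcI
  obtain ⟨a, haI, ⟨A, hA⟩, hac, hca, havals, hapos, hastrict, halin⟩ :=
    exists_base hn hδ hR' hcI hεc hslopec
  have hapos' : 0 < a := hIpos haI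
  -- bounds on a coming from M1
  have haQ : Q < a := by
    linarith [hM1a]
  have haAB : AB ≤ a := by
    linarith [hM1b]
  have haδ : δ ≤ ε₁ * a := by
    have h2 : δ/ε₁ ≤ a := by linarith [hM1c]
    calc δ = (δ/ε₁) * ε₁ := by field_simp
    _ ≤ a * ε₁ := mul_le_mul_of_nonneg_right h2 (le_of_lt hε₁)
    _ = ε₁ * a := by ring
  have haη : 4*δ + 2*δ*η ≤ a*η := by
    have h2 : 4*δ/η + 2*δ ≤ a := by linarith [hM1d]
    have h3 : (4*δ/η + 2*δ)*η = 4*δ + 2*δ*η := by field_simp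
    calc 4*δ + 2*δ*η = (4*δ/η + 2*δ)*η := h3.symm
    _ ≤ a*η := mul_le_mul_of_nonneg_right h2 (le_of_lt hηpos)
  -- coordinate bounds at a
  have hRca : R c = R a + (c - a) • eVec n 0 := halin c ⟨hcI, ⟨hac, by linarith⟩⟩
  have hbnd_a : ∀ m, a*(x m - η) ≤ R a m ∧ R a m ≤ a*(x m + η) := by
    intro m
    obtain ⟨hRc1, hRc2⟩ := traj_to_prod hcpos (hiconv m)
    have h2 : R c m = R a m + (c - a) * (if (m:ℕ) = 0 then 1 else 0) := by
      have h3 := congrFun hRca m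
      simpa [eVec] using h3
    refine coord_squeeze hRc1 hRc2 h2 ?_ (by linarith) (by linarith)
      (hx01 m).1 (hx01 m).2 haη hηpos hδ
    by_cases hm : (m:ℕ) = 0
    · right; rw [if_pos hm]
    · left; rw [if_neg hm]
  -- the lift amount h
  set H := ⌈ε₁ * a / δ⌉ with hHdef
  set h : ℝ := δ * (H:ℝ) with hhdef
  have hh1 : ε₁ * a ≤ h := by
    have h1 := Int.le_ceil (ε₁ * a / δ)
    calc ε₁*a = δ * (ε₁*a/δ) := by field_simp
    _ ≤ δ * (H:ℝ) := mul_le_mul_of_nonneg_left h1 (le_of_lt hδ)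
  have hh2 : h ≤ ε₁ * a + δ := by
    have h1 := Int.ceil_lt_add_one (ε₁ * a / δ)
    have h2 : δ * (H:ℝ) < δ * (ε₁*a/δ + 1) := mul_lt_mul_of_pos_left h1 hδ
    have h3 : δ * (ε₁*a/δ + 1) = ε₁*a + δ := by field_simp
    linarith
  clear_value H
  have hhpos : 0 < h := lt_of_lt_of_le (by positivity) hh1
  have hHpos : 0 < H := by
    by_contra hH
    push_neg at hH
    have h8 : (H:ℝ) ≤ 0 := by exact_mod_cast hH
    have h9 : δ * (H:ℝ) ≤ δ * 0 := mul_le_mul_of_nonneg_left h8 hδ.le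
    rw [mul_zero] at h9
    rw [hhdef] at hhpos
    linarith
  have hApos : 0 < A := by
    by_contra hA'
    push_neg at hA'
    have h8 : (A:ℝ) ≤ 0 := by exact_mod_cast hA'
    have h9 : δ * (A:ℝ) ≤ δ * 0 := mul_le_mul_of_nonneg_left h8 hδ.le
    rw [mul_zero] at h9
    rw [hA] at hapos'
    linarith
  have hnh : 0 < (n:ℝ)*h := mul_pos hnpos hhpos
  clear_value h
  -- define u
  set u : ℝ := a + (n:ℝ)*h with hudef
  clear_value u
  have hua : u - (n:ℝ)*h = a := by rw [hudef]; ring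
  have hupos : 0 < u := by rw [hudef]; linarith
  have hau : a ≤ u := by rw [hudef]; linarith
  have huQ : Q < u := by linarith
  have hu_nat : ∃ anat : ℕ, 0 < anat ∧ u = anat * δ := by
    refine ⟨(A + (n:ℤ)*H).toNat, ?_, ?_⟩
    · have : (0:ℤ) < A + (n:ℤ)*H := by positivity
      omega
    · have hnn : (0:ℤ) ≤ A + (n:ℤ)*H := by positivity
      have h1 : (((A + (n:ℤ)*H).toNat : ℕ) : ℝ) = (A:ℝ) + (n:ℝ)*(H:ℝ) := by
        have h2 : (((A + (n:ℤ)*H).toNat : ℕ) : ℤ) = A + (n:ℤ)*H := Int.toNat_of_nonneg hnn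
        have h3 := congrArg (fun z : ℤ => (z : ℝ)) h2
        push_cast at h3
        convert h3 using 2 <;> push_cast <;> ring
      rw [h1, hudef, hA, hhdef]
      ring
  -- net for (iv)
  obtain ⟨b0, hb0⟩ := net_FSet (n := n) hsys' hIpos hε₁ a
  -- choose the second anchor index j
  set M2 : ℝ := max (max (b0 + 2*δ) (u + 2*δ)) (max (4*δ/ε₂ + 4*δ) ((n:ℝ)*h/ε₂ + 2*δ)) with hM2
  have hM2a : b0 + 2*δ ≤ M2 := le_trans (le_max_left _ _) (le_max_left _ _)
  have hM2b : u + 2*δ ≤ M2 := le_trans (le_max_right _ _) (le_max_left _ _)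
  have hM2c : 4*δ/ε₂ + 4*δ ≤ M2 := le_trans (le_max_left _ _) (le_max_right _ _)
  have hM2d : (n:ℝ)*h/ε₂ + 2*δ ≤ M2 := le_trans (le_max_right _ _) (le_max_right _ _)
  clear_value M2
  obtain ⟨j, hjM, hjconv⟩ : ∃ j, M2 ≤ qs j ∧
      ∀ m, |(qs j)⁻¹ * R (qs j) m - x m| ≤ ε₂/2 := by
    obtain ⟨j, h1, h2⟩ := ((hqtop.eventually_ge_atTop M2).and (hconv' (ε₂/2) (by linarith))).exists
    exact ⟨j, h1, h2⟩
  obtain ⟨εc', hεc', hslopec'⟩ := hqslope j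
  set c' := qs j with hc'
  clear_value c'
  have hc'I : c' ∈ I := by rw [hc']; exact hqI j
  have hc'pos : 0 < c' := hIpos hc'I
  obtain ⟨b, hbI, ⟨B, hB⟩, hbc, hcb, hbvals, hbpos, hbstrict, hblin⟩ :=
    exists_base hn hδ hR' hc'I hεc' hslopec'
  have hbpos' : 0 < b := hIpos hbI
  have hbb0 : b0 ≤ b := by
    linarith [hM2a]
  have hbu : u ≤ b := by
    linarith [hM2b]
  have hbε₂ : 4*δ + 2*δ*ε₂ ≤ b*ε₂ := by
    have h2 : 4*δ/ε₂ + 2*δ ≤ b := by linarith [hM2c]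
    have h3 : (4*δ/ε₂ + 2*δ)*ε₂ = 4*δ + 2*δ*ε₂ := by field_simp
    calc 4*δ + 2*δ*ε₂ = (4*δ/ε₂ + 2*δ)*ε₂ := h3.symm
    _ ≤ b*ε₂ := mul_le_mul_of_nonneg_right h2 (le_of_lt hε₂)
  have hbh : (n:ℝ)*h ≤ ε₂*b := by
    have h2 : (n:ℝ)*h/ε₂ ≤ b := by linarith [hM2d]
    calc (n:ℝ)*h = ((n:ℝ)*h/ε₂) * ε₂ := by field_simp
    _ ≤ b * ε₂ := mul_le_mul_of_nonneg_right h2 (le_of_lt hε₂)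
    _ = ε₂*b := by ring
  have hab : a < b := by linarith
  have hIab : Set.Icc a b ⊆ I := hOrd.out haI hbI
  -- coordinate bounds at b
  have hRc'b : R c' = R b + (c' - b) • eVec n 0 := hblin c' ⟨hc'I, ⟨hbc, by linarith⟩⟩
  have hbε₂' : 4*δ + 2*δ*ε₂ ≤ b*ε₂ := hbε₂
  have hbnd_b : ∀ m, b*(x m - ε₂) ≤ R b m ∧ R b m ≤ b*(x m + ε₂) := by
    intro m
    obtain ⟨hRc1, hRc2⟩ := traj_to_prod hc'pos (hjconv m)
    have h2 : R c' m = R b m + (c' - b) * (if (m:ℕ) = 0 then 1 else 0) := by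
      have h3 := congrFun hRc'b m
      simpa [eVec] using h3
    refine coord_squeeze hRc1 hRc2 h2 ?_ (by linarith) (by linarith)
      (hx01 m).1 (hx01 m).2 hbε₂' hε₂ hδ
    by_cases hm : (m:ℕ) = 0
    · right; rw [if_pos hm]
    · left; rw [if_neg hm]
  -- define v
  set v : ℝ := b + (n:ℝ)*h with hvdef
  clear_value v
  have hvb : v - (n:ℝ)*h = b := by rw [hvdef]; ring
  have hvpos : 0 < v := by rw [hvdef]; linarith
  have huv : u < v := by rw [hudef, hvdef]; linarith
  have hv_nat : ∃ bnat : ℕ, 0 < bnat ∧ v = bnat * δ := by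
    have hBpos : 0 < B := by
      by_contra hB'
      push_neg at hB'
      have h8 : (B:ℝ) ≤ 0 := by exact_mod_cast hB'
      have h9 : δ * (B:ℝ) ≤ δ * 0 := mul_le_mul_of_nonneg_left h8 hδ.le
      rw [mul_zero] at h9
      rw [hB] at hbpos'
      linarith
    refine ⟨(B + (n:ℤ)*H).toNat, ?_, ?_⟩
    · have : (0:ℤ) < B + (n:ℤ)*H := by positivity
      omega
    · have hnn : (0:ℤ) ≤ B + (n:ℤ)*H := by positivity
      have h1 : (((B + (n:ℤ)*H).toNat : ℕ) : ℝ) = (B:ℝ) + (n:ℝ)*(H:ℝ) := by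
        have h2 : (((B + (n:ℤ)*H).toNat : ℕ) : ℤ) = B + (n:ℤ)*H := Int.toNat_of_nonneg hnn
        have h3 := congrArg (fun z : ℤ => (z : ℝ)) h2
        push_cast at h3
        convert h3 using 2 <;> push_cast <;> ring
      rw [h1, hvdef, hB, hhdef]
      ring
  -- the system P
  set P : ℝ → RVec n := fun t m => R (t - (n:ℝ)*h) m + h with hPdef
  have hPapp : ∀ t m, P t m = R (t - (n:ℝ)*h) m + h := fun t m => rfl
  clear_value P
  have hsub : ∀ t, t ∈ Set.Icc u v → t - (n:ℝ)*h ∈ I ∧ a ≤ t - (n:ℝ)*h ∧ t - (n:ℝ)*h ≤ b := by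
    intro t ht
    have h1 : a ≤ t - (n:ℝ)*h := by
      have := ht.1; rw [hudef] at this; linarith
    have h2 : t - (n:ℝ)*h ≤ b := by
      have := ht.2; rw [hvdef] at this; linarith
    exact ⟨hIab ⟨h1, h2⟩, h1, h2⟩
  have Ptrans : ∀ (t q : ℝ) (E : RVec n),
      R (t - (n:ℝ)*h) = R (q - (n:ℝ)*h) + ((t - (n:ℝ)*h) - (q - (n:ℝ)*h)) • E →
      P t = P q + (t - q) • E := by
    intro t q E hE
    funext m
    have h1 := congrFun hE m
    simp only [Pi.add_apply, Pi.smul_apply, smul_eq_mul] at h1 ⊢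
    rw [hPapp, hPapp, h1]
    ring
  -- linearity of P to the right of u
  have hPlin : ∀ t ∈ Set.Icc u v ∩ Set.Icc u (u + ((c - a) + εc)),
      P t = P u + (t - u) • eVec n 0 := by
    rintro t ⟨ht1, ht2⟩
    obtain ⟨htI, hta, htb⟩ := hsub t ht1
    apply Ptrans
    rw [hua]
    apply halin
    refine ⟨htI, hta, ?_⟩
    have h9 := ht2.2
    rw [hudef] at h9
    linarith
  -- P is an n-system on [u, v]
  have hPsys : IsNSystem n (Set.Icc u v) P := by
    refine ⟨fun t ht => le_trans hupos.le ht.1, ordConnected_Icc, ?_, ?_⟩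
    · rw [interior_Icc]
      exact ⟨(u+v)/2, by constructor <;> linarith⟩
    · intro q hq
      obtain ⟨hsI, hsa, hsb⟩ := hsub q hq
      obtain ⟨⟨h0, hmono, hsum⟩, ε, hε, k, ℓ, hLs, hRs, h3s⟩ := hS (q - (n:ℝ)*h) hsI
      constructor
      · refine ⟨fun m => ?_, fun m1 m2 h12 => ?_, ?_⟩
        · rw [hPapp]
          have h9 := h0 m
          linarith
        · simp only [hPapp]
          have h9 := hmono h12
          simpa using h9
        · have h9 : ∑ m, P q m = ∑ m, (R (q - (n:ℝ)*h) m + h) :=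
            Finset.sum_congr rfl (fun m _ => hPapp q m)
          rw [h9, Finset.sum_add_distrib, hsum, Finset.sum_const,
            Finset.card_univ, Fintype.card_fin, nsmul_eq_mul]
          ring
      · refine ⟨ε, hε, k, ℓ, ?_, ?_, ?_⟩
        · rintro t ⟨ht1, ht2⟩
          obtain ⟨htI, _, _⟩ := hsub t ht1
          apply Ptrans
          apply hLs
          exact ⟨htI, by constructor <;> [linarith [ht2.1]; linarith [ht2.2]]⟩
        · rintro t ⟨ht1, ht2⟩
          obtain ⟨htI, _, _⟩ := hsub t ht1
          apply Ptrans
          apply hRs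
          exact ⟨htI, by constructor <;> [linarith [ht2.1]; linarith [ht2.2]]⟩
        · intro hqint hlk m hm1 hm2
          have hqoo : q ∈ Set.Ioo u v := by rwa [interior_Icc] at hqint
          have hoo : Set.Ioo a b ⊆ interior I :=
            interior_maximal (fun w hw => hIab (Set.Ioo_subset_Icc_self hw)) isOpen_Ioo
          have hsint : q - (n:ℝ)*h ∈ interior I := by
            apply hoo
            constructor
            · have h9 := hqoo.1; rw [hudef] at h9; linarith
            · have h9 := hqoo.2; rw [hvdef] at h9; linarith
          have h9 := h3s hsint hlk m hm1 hm2
          rw [hPapp, hPapp, h9]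
  have hfr : frontier (Set.Icc u v) = {u, v} := frontier_Icc huv.le
  have hoo : Set.Ioo a b ⊆ interior I :=
    interior_maximal (fun w hw => hIab (Set.Ioo_subset_Icc_self hw)) isOpen_Ioo
  -- classification of switch numbers of P
  have hswP : ∀ q, IsSwitchNumber n (Set.Icc u v) P q →
      ∃ s, q - (n:ℝ)*h = s ∧ (∀ m, ∃ z : ℤ, R s m = δ * z) ∧
        (∀ m, 0 < R s m) ∧ StrictMono (R s) := by
    intro q hsw
    obtain ⟨hqmem, hcase⟩ := hsw
    rcases hcase with hfr' | ⟨hqint, ε, hε, k, ℓ, hkl, hLP, hRP⟩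
    · rw [hfr] at hfr'
      rcases hfr' with h1 | h1
      · exact ⟨a, by rw [h1, hua], havals, hapos, hastrict⟩
      · have h1' : q = v := h1
        exact ⟨b, by rw [h1', hvb], hbvals, hbpos, hbstrict⟩
    · obtain ⟨hsI, hsa, hsb⟩ := hsub q hqmem
      have hqoo : q ∈ Set.Ioo u v := by rwa [interior_Icc] at hqint
      have hsoo : q - (n:ℝ)*h ∈ Set.Ioo a b := by
        constructor
        · have h9 := hqoo.1; rw [hudef] at h9; linarith
        · have h9 := hqoo.2; rw [hvdef] at h9; linarith
      have hsint : q - (n:ℝ)*h ∈ interior I := hoo hsoo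
      have hε'pos : 0 < min ε (min ((q - (n:ℝ)*h) - a) (b - (q - (n:ℝ)*h))) :=
        lt_min hε (lt_min (by linarith [hsoo.1]) (by linarith [hsoo.2]))
      have hswR : IsSwitchNumber n I R (q - (n:ℝ)*h) := by
        refine ⟨hsI, Or.inr ⟨hsint, _, hε'pos, k, ℓ, hkl, ?_, ?_⟩⟩
        · rintro t' ⟨ht'I, ht'1, ht'2⟩
          have hε'1 : min ε (min ((q - (n:ℝ)*h) - a) (b - (q - (n:ℝ)*h))) ≤ ε :=
            min_le_left _ _
          have hε'2 : min ε (min ((q - (n:ℝ)*h) - a) (b - (q - (n:ℝ)*h)))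
              ≤ (q - (n:ℝ)*h) - a := le_trans (min_le_right _ _) (min_le_left _ _)
          have hmem : t' + (n:ℝ)*h ∈ Set.Icc u v := by
            constructor
            · rw [hudef]; linarith
            · rw [hvdef]; linarith
          have h1 := hLP (t' + (n:ℝ)*h) ⟨hmem, by constructor <;> linarith⟩
          funext m
          have h2 := congrFun h1 m
          simp only [Pi.add_apply, Pi.smul_apply, smul_eq_mul] at h2 ⊢
          rw [hPapp, hPapp] at h2
          rw [show t' + (n:ℝ)*h - (n:ℝ)*h = t' from by ring] at h2
          linear_combination h2
        · rintro t' ⟨ht'I, ht'1, ht'2⟩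
          have hε'1 : min ε (min ((q - (n:ℝ)*h) - a) (b - (q - (n:ℝ)*h))) ≤ ε :=
            min_le_left _ _
          have hε'3 : min ε (min ((q - (n:ℝ)*h) - a) (b - (q - (n:ℝ)*h)))
              ≤ b - (q - (n:ℝ)*h) := le_trans (min_le_right _ _) (min_le_right _ _)
          have hmem : t' + (n:ℝ)*h ∈ Set.Icc u v := by
            constructor
            · rw [hudef]; linarith
            · rw [hvdef]; linarith
          have h1 := hRP (t' + (n:ℝ)*h) ⟨hmem, by constructor <;> linarith⟩
          funext m
          have h2 := congrFun h1 m
          simp only [Pi.add_apply, Pi.smul_apply, smul_eq_mul] at h2 ⊢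
          rw [hPapp, hPapp] at h2
          rw [show t' + (n:ℝ)*h - (n:ℝ)*h = t' from by ring] at h2
          linear_combination h2
      exact ⟨q - (n:ℝ)*h, rfl, hrig _ hswR, (hndeg _ hswR).1, (hndeg _ hswR).2⟩
  have hPrigid : IsRigid n δ (Set.Icc u v) P := by
    refine ⟨⟨hPsys, isClosed_Icc, fun t ht => lt_of_lt_of_le hupos ht.1, ?_⟩, ?_⟩
    · intro q hsw
      obtain ⟨s, hqs, _, hpos, hstrict⟩ := hswP q hsw
      constructor
      · intro m
        rw [hPapp, hqs]
        have h9 := hpos m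
        linarith
      · intro m1 m2 h12
        simp only [hPapp, hqs]
        have h9 := hstrict h12
        simpa using h9
    · intro q hsw m
      obtain ⟨s, hqs, hvals', _, _⟩ := hswP q hsw
      obtain ⟨z, hz⟩ := hvals' m
      refine ⟨z + H, ?_⟩
      rw [hPapp, hqs, hz, hhdef]
      push_cast
      ring
  refine ⟨u, v, hu_nat, hv_nat, huQ, huv, P, hPrigid, ?_, ?_, ?_, ?_⟩
  · exact ⟨(c - a) + εc, by linarith, hPlin⟩
  · intro m
    have hPum : P u m = R a m + h := by rw [hPapp, hua]
    obtain ⟨hba1, hba2⟩ := hbnd_a m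
    constructor
    · rw [inv_mul_eq_div, inv_mul_eq_div, div_le_div_iff₀ h3n hupos, hPum, hudef]
      exact lower_ii hn2 hapos' hba1 hh1 hh2 haδ hηε₁ hηkey (hx01 m).1 hε₁ hδ
    · rw [inv_mul_eq_div, div_le_iff₀ hupos, hPum, hudef]
      exact upper_ii hn2 hapos' hba2 hh2 haδ hηε₁ (hx01 m).1 hε₁ hδ hhpos
  · intro m
    have hPvm : P v m = R b m + h := by rw [hPapp, hvb]
    obtain ⟨hbb1, hbb2⟩ := hbnd_b m
    constructor
    · rw [inv_mul_eq_div, le_div_iff₀ hvpos, hPvm, hvdef]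
      exact lower_iii hn2 hbpos' hbb1 hbh (hx01 m).2 hhpos hε₂
    · rw [inv_mul_eq_div, div_le_iff₀ hvpos, hPvm, hvdef]
      exact upper_iii hn2 hbpos' hbb2 hbh (hx01 m).1 hhpos hε₂
  · -- (iv)
    have hmemset : ((2*(n:ℝ)+2)*ε₁) ∈ {ε : ℝ | 0 < ε ∧
        FSet n I R ⊆ {y : RVec n | ∃ q, u ≤ q ∧ q ≤ v ∧ y = q⁻¹ • P q} + cubeNbhd n ε ∧
        {y : RVec n | ∃ q, u ≤ q ∧ q ≤ v ∧ y = q⁻¹ • P q} ⊆ FSet n I R + cubeNbhd n ε} := by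
      refine ⟨mul_pos (by linarith) hε₁, ?_, ?_⟩
      · intro y hy
        obtain ⟨s, hsI, hsa, hsb0, hsdist⟩ := hb0 y hy
        have hsb : s ≤ b := le_trans hsb0 hbb0
        have hspos : 0 < s := hIpos hsI
        have hqu : u ≤ s + (n:ℝ)*h := by rw [hudef]; linarith
        have hqv : s + (n:ℝ)*h ≤ v := by rw [hvdef]; linarith
        rw [Set.mem_add]
        refine ⟨(s + (n:ℝ)*h)⁻¹ • P (s + (n:ℝ)*h), ⟨s + (n:ℝ)*h, hqu, hqv, rfl⟩,
          y - (s + (n:ℝ)*h)⁻¹ • P (s + (n:ℝ)*h), ?_, by abel⟩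
        simp only [cubeNbhd, Set.mem_setOf_eq]
        intro m
        have h1 : |((s + (n:ℝ)*h)⁻¹ • P (s + (n:ℝ)*h)) m - (s⁻¹ • R s) m|
            ≤ 2*(n:ℝ)*ε₁ := by
          simp only [Pi.smul_apply, smul_eq_mul]
          rw [hPapp]
          rw [show s + (n:ℝ)*h - (n:ℝ)*h = s from by ring]
          exact close_bound hn2 hspos hapos' hsa (sys_coord_bounds hsys' hsI m).1
            (sys_coord_bounds hsys' hsI m).2 hhpos hh2 haδ hε₁
        have h2 : |(s⁻¹ • R s) m - y m| ≤ ε₁ := by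
          have h9 := dist_le_pi_dist (s⁻¹ • R s) y m
          rw [Real.dist_eq] at h9
          linarith [hsdist]
        have h3 : (y - (s + (n:ℝ)*h)⁻¹ • P (s + (n:ℝ)*h)) m
            = y m - ((s + (n:ℝ)*h)⁻¹ • P (s + (n:ℝ)*h)) m := rfl
        rw [h3]
        calc |y m - ((s + (n:ℝ)*h)⁻¹ • P (s + (n:ℝ)*h)) m|
            ≤ |y m - (s⁻¹ • R s) m|
              + |(s⁻¹ • R s) m - ((s + (n:ℝ)*h)⁻¹ • P (s + (n:ℝ)*h)) m| :=
            abs_sub_le _ _ _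
        _ ≤ ε₁ + 2*(n:ℝ)*ε₁ := by
            have h2' : |y m - (s⁻¹ • R s) m| ≤ ε₁ := by
              rw [abs_sub_comm]; exact h2
            have h1' : |(s⁻¹ • R s) m - ((s + (n:ℝ)*h)⁻¹ • P (s + (n:ℝ)*h)) m|
                ≤ 2*(n:ℝ)*ε₁ := by
              rw [abs_sub_comm]; exact h1
            exact add_le_add h2' h1'
        _ ≤ (2*(n:ℝ)+2)*ε₁ := by linarith
      · rintro y ⟨q, hqu, hqv, hyq⟩
        obtain ⟨hsI, hsa, hsb⟩ := hsub q ⟨hqu, hqv⟩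
        have hspos : 0 < q - (n:ℝ)*h := hIpos hsI
        obtain ⟨yF, hyF, hdist⟩ := hAB (q - (n:ℝ)*h) hsI (by linarith)
        rw [Set.mem_add]
        refine ⟨yF, hyF, y - yF, ?_, by abel⟩
        simp only [cubeNbhd, Set.mem_setOf_eq]
        intro m
        have h1 : |(q⁻¹ • P q) m - ((q - (n:ℝ)*h)⁻¹ • R (q - (n:ℝ)*h)) m|
            ≤ 2*(n:ℝ)*ε₁ := by
          simp only [Pi.smul_apply, smul_eq_mul]
          rw [hPapp]
          rw [show q = (q - (n:ℝ)*h) + (n:ℝ)*h from by ring]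
          rw [show q - (n:ℝ)*h + (n:ℝ)*h - (n:ℝ)*h = q - (n:ℝ)*h from by ring]
          exact close_bound hn2 hspos hapos' hsa
            (sys_coord_bounds hsys' hsI m).1 (sys_coord_bounds hsys' hsI m).2
            hhpos hh2 haδ hε₁
        have h2 : |((q - (n:ℝ)*h)⁻¹ • R (q - (n:ℝ)*h)) m - yF m| ≤ ε₁ := by
          have h9 := dist_le_pi_dist ((q - (n:ℝ)*h)⁻¹ • R (q - (n:ℝ)*h)) yF m
          rw [Real.dist_eq] at h9
          linarith [hdist.le]
        have h3 : (y - yF) m = (q⁻¹ • P q) m - yF m := by rw [hyq]; rfl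
        rw [h3]
        calc |(q⁻¹ • P q) m - yF m|
            ≤ |(q⁻¹ • P q) m - ((q - (n:ℝ)*h)⁻¹ • R (q - (n:ℝ)*h)) m|
              + |((q - (n:ℝ)*h)⁻¹ • R (q - (n:ℝ)*h)) m - yF m| := abs_sub_le _ _ _
        _ ≤ 2*(n:ℝ)*ε₁ + ε₁ := add_le_add h1 h2
        _ ≤ (2*(n:ℝ)+2)*ε₁ := by linarith
    have hbdd : BddBelow {ε : ℝ | 0 < ε ∧
        FSet n I R ⊆ {y : RVec n | ∃ q, u ≤ q ∧ q ≤ v ∧ y = q⁻¹ • P q} + cubeNbhd n ε ∧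
        {y : RVec n | ∃ q, u ≤ q ∧ q ≤ v ∧ y = q⁻¹ • P q} ⊆ FSet n I R + cubeNbhd n ε} :=
      ⟨0, fun ε hε => hε.1.le⟩
    have hle := csInf_le hbdd hmemset
    have heq : cubeDist n (FSet n I R)
        {y : RVec n | ∃ q, u ≤ q ∧ q ≤ v ∧ y = q⁻¹ • P q} = sInf {ε : ℝ | 0 < ε ∧
        FSet n I R ⊆ {y : RVec n | ∃ q, u ≤ q ∧ q ≤ v ∧ y = q⁻¹ • P q} + cubeNbhd n ε ∧
        {y : RVec n | ∃ q, u ≤ q ∧ q ≤ v ∧ y = q⁻¹ • P q} ⊆ FSet n I R + cubeNbhd n ε} := rfl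
    rw [heq]
    have hnε₁0 : 0 ≤ (n:ℝ)*ε₁ := mul_nonneg (by linarith) hε₁.le
    have hfin : (2*(n:ℝ)+2)*ε₁ ≤ 4*((n:ℝ)+1)*ε₁ := by linarith
    linarith
end
end

section
/- Let E be an elementary path in Δ̄^(3) with vertices A, A*, B*, C*, C, B. Then the coordinatewise infimum of E is the point (x_1(C), min{x_2(C*), x_2(B)}, x_3(A*)), and the coordinatewise supremum of E is the point (x_1(A), max{x_2(B*), x_2(C)}, x_3(C*)), where x_i(·) denotes the i-th coordinate of a point of ℝ³ and the coordinatewise infimum (resp. supremum) of a bounded subset S of ℝ³ is the point whose i-th coordinate is the infimum (resp. supremum) of {x_i(s) : s ∈ S}. -/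
open Filter Set Pointwise Topology

noncomputable section

/-- The closed triangle `Δ̄⁽³⁾ = {0 ≤ x₁ ≤ x₂ ≤ x₃, x₁ + x₂ + x₃ = 1}`. -/
def DeltaBar3 : Set (RVec 3) :=
  {x | 0 ≤ x 0 ∧ x 0 ≤ x 1 ∧ x 1 ≤ x 2 ∧ x 0 + x 1 + x 2 = 1}

/-- The open triangle `Δ⁽³⁾ = {0 < x₁ < x₂ < x₃, x₁ + x₂ + x₃ = 1}`. -/
def DeltaOpen3 : Set (RVec 3) :=
  {x | 0 < x 0 ∧ x 0 < x 1 ∧ x 1 < x 2 ∧ x 0 + x 1 + x 2 = 1}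

def e1v : RVec 3 := ![1, 0, 0]
def e2v : RVec 3 := ![0, 1, 0]
def e3v : RVec 3 := ![0, 0, 1]
def f1v : RVec 3 := ![0, 1/2, 1/2]
def f2v : RVec 3 := ![1/3, 1/3, 1/3]

/-- The conditions on the six points `A, A*, B*, C*, C, B` of an elementary path in
`Δ̄⁽³⁾` (here `f₃ = e₃`). -/
def IsElemPath (A As Bs Cs C B : RVec 3) : Prop :=
  A ∈ segment ℝ f2v e3v ∧
  As ∈ segment ℝ f2v f1v ∩ segment ℝ A e2v ∧
  Bs ∈ segment ℝ As f1v ∧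
  Cs ∈ DeltaBar3 ∩ segment ℝ Bs e3v ∧
  C ∈ DeltaBar3 ∩ segment ℝ Cs e2v ∧
  B ∈ segment ℝ A e3v ∩ segment ℝ C e1v

/-- The strictness conditions for an elementary path: `A, B ∈ L`, `A*, B* ∈ L*`,
`C, C* ∈ Δ⁽³⁾`, where `L` and `L*` are the open segments `(f₂, f₃)` and `(f₂, f₁)`. -/
def IsStrictElemPath (A As Bs Cs C B : RVec 3) : Prop :=
  IsElemPath A As Bs Cs C B ∧
  A ∈ openSegment ℝ f2v e3v ∧ B ∈ openSegment ℝ f2v e3v ∧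
  As ∈ openSegment ℝ f2v f1v ∧ Bs ∈ openSegment ℝ f2v f1v ∧
  C ∈ DeltaOpen3 ∧ Cs ∈ DeltaOpen3

/-- The elementary path itself: the closed polygonal chain through
`A, A*, B*, C*, C, B, A`. -/
def pathSet (A As Bs Cs C B : RVec 3) : Set (RVec 3) :=
  segment ℝ A As ∪ segment ℝ As Bs ∪ segment ℝ Bs Cs ∪
    segment ℝ Cs C ∪ segment ℝ C B ∪ segment ℝ B A

lemma seg_coord_le {X Y p : RVec 3} (i : Fin 3) (hp : p ∈ segment ℝ X Y) {v : ℝ}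
    (hX : X i ≤ v) (hY : Y i ≤ v) : p i ≤ v := by
  obtain ⟨a, b, ha, hb, hab, rfl⟩ := hp
  simp only [Pi.add_apply, Pi.smul_apply, smul_eq_mul]
  have h1 := mul_le_mul_of_nonneg_left hX ha
  have h2 := mul_le_mul_of_nonneg_left hY hb
  have hv : a * v + b * v = v := by rw [← add_mul, hab, one_mul]
  linarith

lemma le_seg_coord {X Y p : RVec 3} (i : Fin 3) (hp : p ∈ segment ℝ X Y) {v : ℝ}
    (hX : v ≤ X i) (hY : v ≤ Y i) : v ≤ p i := by
  obtain ⟨a, b, ha, hb, hab, rfl⟩ := hp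
  simp only [Pi.add_apply, Pi.smul_apply, smul_eq_mul]
  have h1 := mul_le_mul_of_nonneg_left hX ha
  have h2 := mul_le_mul_of_nonneg_left hY hb
  have hv : a * v + b * v = v := by rw [← add_mul, hab, one_mul]
  linarith

lemma conv_pull {x t t' c : ℝ} (ht' : 0 ≤ t') (htt : t + t' = 1) (hx : x ≤ c) :
    x ≤ t * x + t' * c := by
  have ht : t = 1 - t' := by linarith
  subst ht
  have h := mul_nonneg ht' (sub_nonneg.2 hx)
  nlinarith [h]

lemma conv_shrink {x t t' c : ℝ} (ht' : 0 ≤ t') (htt : t + t' = 1) (hc : c ≤ x) :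
    t * x + t' * c ≤ x := by
  have ht : t = 1 - t' := by linarith
  subst ht
  have h := mul_nonneg ht' (sub_nonneg.2 hc)
  nlinarith [h]

lemma conv_ub {x t t' c : ℝ} (ht : 0 ≤ t) (ht' : 0 ≤ t') (htt : t + t' = 1)
    (hx : x ≤ c) : t * x + t' * c ≤ c := by
  have htt' : t' = 1 - t := by linarith
  subst htt'
  have h := mul_nonneg ht (sub_nonneg.2 hx)
  nlinarith [h]

set_option maxHeartbeats 1000000 in
/-- **Lemma (extrema on an elementary path).** For an elementary path `E` with
vertices `A, A*, B*, C*, C, B`, the coordinatewise infimum of `E` is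
`(x₁(C), min{x₂(C*), x₂(B)}, x₃(A*))` and the coordinatewise supremum is
`(x₁(A), max{x₂(B*), x₂(C)}, x₃(C*))`. -/
theorem elemPath_inf_sup (A As Bs Cs C B : RVec 3)
    (h : IsElemPath A As Bs Cs C B) :
    sInf ((fun p : RVec 3 => p 0) '' pathSet A As Bs Cs C B) = C 0 ∧
    sInf ((fun p : RVec 3 => p 1) '' pathSet A As Bs Cs C B) = min (Cs 1) (B 1) ∧
    sInf ((fun p : RVec 3 => p 2) '' pathSet A As Bs Cs C B) = As 2 ∧
    sSup ((fun p : RVec 3 => p 0) '' pathSet A As Bs Cs C B) = A 0 ∧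
    sSup ((fun p : RVec 3 => p 1) '' pathSet A As Bs Cs C B) = max (Bs 1) (C 1) ∧
    sSup ((fun p : RVec 3 => p 2) '' pathSet A As Bs Cs C B) = Cs 2 := by
  obtain ⟨hA, ⟨hAsL, hAsA⟩, hBs, ⟨hCsD, hCsS⟩, ⟨hCD, hCS⟩, hBA, hBC⟩ := h
  -- extract parameters
  obtain ⟨a, a', ha, ha', haa, hAe⟩ := hA
  obtain ⟨b, b', hb, hb', hbb, hAse⟩ := hAsL
  obtain ⟨c, c', hc, hc', hcc, hAse2⟩ := hAsA
  obtain ⟨d, d', hd, hd', hdd, hBse⟩ := hBs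
  obtain ⟨e, e', he, he', hee, hCse⟩ := hCsS
  obtain ⟨f, f', hf, hf', hff, hCe⟩ := hCS
  obtain ⟨g, g', hg, hg', hgg, hBe1⟩ := hBA
  obtain ⟨k, k', hk, hk', hkk, hBe2⟩ := hBC
  obtain ⟨hCs0, hCs01, hCs12, hCssum⟩ := hCsD
  obtain ⟨hC0, hC01, hC12, hCsum⟩ := hCD
  have hA0 : A 0 = a * (1/3) := by rw [← hAe]; simp [f2v, e3v]
  have hA1 : A 1 = a * (1/3) := by rw [← hAe]; simp [f2v, e3v]
  have hA2 : A 2 = a * (1/3) + a' := by rw [← hAe]; simp [f2v, e3v]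
  have hAs0 : As 0 = b * (1/3) := by rw [← hAse]; simp [f2v, f1v]
  have hAs1 : As 1 = b * (1/3) + b' * (1/2) := by rw [← hAse]; simp [f2v, f1v]
  have hAs2 : As 2 = b * (1/3) + b' * (1/2) := by rw [← hAse]; simp [f2v, f1v]
  have hAs0' : As 0 = c * A 0 := by rw [← hAse2]; simp [e2v]
  have hAs1' : As 1 = c * A 1 + c' := by rw [← hAse2]; simp [e2v]
  have hAs2' : As 2 = c * A 2 := by rw [← hAse2]; simp [e2v]
  have hBs0 : Bs 0 = d * As 0 := by rw [← hBse]; simp [f1v]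
  have hBs1 : Bs 1 = d * As 1 + d' * (1/2) := by rw [← hBse]; simp [f1v]
  have hBs2 : Bs 2 = d * As 2 + d' * (1/2) := by rw [← hBse]; simp [f1v]
  have hCs0e : Cs 0 = e * Bs 0 := by rw [← hCse]; simp [e3v]
  have hCs1e : Cs 1 = e * Bs 1 := by rw [← hCse]; simp [e3v]
  have hCs2e : Cs 2 = e * Bs 2 + e' := by rw [← hCse]; simp [e3v]
  have hC0e : C 0 = f * Cs 0 := by rw [← hCe]; simp [e2v]
  have hC1e : C 1 = f * Cs 1 + f' := by rw [← hCe]; simp [e2v]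
  have hC2e : C 2 = f * Cs 2 := by rw [← hCe]; simp [e2v]
  have hB0 : B 0 = g * A 0 := by rw [← hBe1]; simp [e3v]
  have hB1 : B 1 = g * A 1 := by rw [← hBe1]; simp [e3v]
  have hB2 : B 2 = g * A 2 + g' := by rw [← hBe1]; simp [e3v]
  have hB0' : B 0 = k * C 0 + k' := by rw [← hBe2]; simp [e1v]
  have hB1' : B 1 = k * C 1 := by rw [← hBe2]; simp [e1v]
  have hB2' : B 2 = k * C 2 := by rw [← hBe2]; simp [e1v]
  -- basic positivity / bounds
  have pA0 : 0 ≤ A 0 := by linarith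
  have pA1 : 0 ≤ A 1 := by linarith
  have pA2 : 0 ≤ A 2 := by linarith
  have bA1 : A 1 ≤ 1 := by linarith
  have bA2 : A 2 ≤ 1 := by linarith
  have pAs0 : 0 ≤ As 0 := by linarith
  have pAs1 : 0 ≤ As 1 := by linarith
  have bAs1 : As 1 ≤ 1/2 := by linarith
  have bAs2 : As 2 ≤ 1/2 := by linarith
  have pBs0 : 0 ≤ Bs 0 := by
    have := mul_nonneg hd pAs0; linarith
  have pBs1 : 0 ≤ Bs 1 := by
    have := mul_nonneg hd pAs1; linarith
  have bBs2 : Bs 2 ≤ 1 := by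
    have := conv_ub hd hd' hdd bAs2; linarith
  have pC1 : 0 ≤ C 1 := le_trans hC0 hC01
  have pC2 : 0 ≤ C 2 := le_trans pC1 hC12
  have bC0 : C 0 ≤ 1 := by linarith
  have pCs0 : 0 ≤ Cs 0 := hCs0
  have pCs2 : 0 ≤ Cs 2 := le_trans (le_trans hCs0 hCs01) hCs12
  have bCs1 : Cs 1 ≤ 1 := by linarith
  -- the eighteen vertex inequalities
  have h1 : C 0 ≤ B 0 := by
    have := conv_pull (x := C 0) (c := 1) hk' hkk bC0; linarith
  have h2 : B 0 ≤ A 0 := by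
    have := conv_shrink (x := A 0) (c := 0) hg' hgg pA0; linarith
  have h3 : C 0 ≤ Cs 0 := by
    have := conv_shrink (x := Cs 0) (c := 0) hf' hff pCs0; linarith
  have h4 : Cs 0 ≤ Bs 0 := by
    have := conv_shrink (x := Bs 0) (c := 0) he' hee pBs0; linarith
  have h5 : Bs 0 ≤ As 0 := by
    have := conv_shrink (x := As 0) (c := 0) hd' hdd pAs0; linarith
  have h6 : As 0 ≤ A 0 := by
    have := conv_shrink (x := A 0) (c := 0) hc' hcc pA0; linarith
  have h7 : Cs 1 ≤ C 1 := by
    have := conv_pull (x := Cs 1) (c := 1) hf' hff bCs1; linarith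
  have h8 : Cs 1 ≤ Bs 1 := by
    have := conv_shrink (x := Bs 1) (c := 0) he' hee pBs1; linarith
  have h9 : As 1 ≤ Bs 1 := by
    have := conv_pull (x := As 1) (c := 1/2) hd' hdd bAs1; linarith
  have h10 : B 1 ≤ A 1 := by
    have := conv_shrink (x := A 1) (c := 0) hg' hgg pA1; linarith
  have h11 : A 1 ≤ As 1 := by
    have := conv_pull (x := A 1) (c := 1) hc' hcc bA1; linarith
  have h12 : B 1 ≤ C 1 := by
    have := conv_shrink (x := C 1) (c := 0) hk' hkk pC1; linarith
  have h13 : As 2 ≤ Bs 2 := by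
    have := conv_pull (x := As 2) (c := 1/2) hd' hdd bAs2; linarith
  have h14 : Bs 2 ≤ Cs 2 := by
    have := conv_pull (x := Bs 2) (c := 1) he' hee bBs2; linarith
  have h15 : As 2 ≤ A 2 := by
    have := conv_shrink (x := A 2) (c := 0) hc' hcc pA2; linarith
  have h16 : A 2 ≤ B 2 := by
    have := conv_pull (x := A 2) (c := 1) hg' hgg bA2; linarith
  have h17 : B 2 ≤ C 2 := by
    have := conv_shrink (x := C 2) (c := 0) hk' hkk pC2; linarith
  have h18 : C 2 ≤ Cs 2 := by
    have := conv_shrink (x := Cs 2) (c := 0) hf' hff pCs2; linarith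
  have eqAs : As 1 = As 2 := by rw [hAs1, hAs2]
  -- vertices belong to the path
  have mA : A ∈ pathSet A As Bs Cs C B := by
    unfold pathSet; left; left; left; left; left; exact left_mem_segment ℝ A As
  have mAs : As ∈ pathSet A As Bs Cs C B := by
    unfold pathSet; left; left; left; left; right; exact left_mem_segment ℝ As Bs
  have mCs : Cs ∈ pathSet A As Bs Cs C B := by
    unfold pathSet; left; left; right; exact left_mem_segment ℝ Cs C
  have mC : C ∈ pathSet A As Bs Cs C B := by
    unfold pathSet; left; right; exact left_mem_segment ℝ C B
  have mB : B ∈ pathSet A As Bs Cs C B := by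
    unfold pathSet; right; exact left_mem_segment ℝ B A
  refine ⟨?_, ?_, ?_, ?_, ?_, ?_⟩
  · refine IsLeast.csInf_eq ⟨⟨C, mC, rfl⟩, ?_⟩
    rintro x ⟨p, hp, rfl⟩
    simp only [pathSet, Set.mem_union] at hp
    rcases hp with ((((hp | hp) | hp) | hp) | hp) | hp <;>
      exact le_seg_coord 0 hp (by linarith) (by linarith)
  · refine IsLeast.csInf_eq ⟨?_, ?_⟩
    · rcases le_total (Cs 1) (B 1) with hle | hle
      · exact ⟨Cs, mCs, (min_eq_left hle).symm⟩
      · exact ⟨B, mB, (min_eq_right hle).symm⟩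
    · have m1 := min_le_left (Cs 1) (B 1)
      have m2 := min_le_right (Cs 1) (B 1)
      rintro x ⟨p, hp, rfl⟩
      simp only [pathSet, Set.mem_union] at hp
      rcases hp with ((((hp | hp) | hp) | hp) | hp) | hp <;>
        exact le_seg_coord 1 hp (by linarith) (by linarith)
  · refine IsLeast.csInf_eq ⟨⟨As, mAs, rfl⟩, ?_⟩
    rintro x ⟨p, hp, rfl⟩
    simp only [pathSet, Set.mem_union] at hp
    rcases hp with ((((hp | hp) | hp) | hp) | hp) | hp <;>
      exact le_seg_coord 2 hp (by linarith) (by linarith)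
  · refine IsGreatest.csSup_eq ⟨⟨A, mA, rfl⟩, ?_⟩
    rintro x ⟨p, hp, rfl⟩
    simp only [pathSet, Set.mem_union] at hp
    rcases hp with ((((hp | hp) | hp) | hp) | hp) | hp <;>
      exact seg_coord_le 0 hp (by linarith) (by linarith)
  · refine IsGreatest.csSup_eq ⟨?_, ?_⟩
    · rcases le_total (Bs 1) (C 1) with hle | hle
      · exact ⟨C, mC, (max_eq_right hle).symm⟩
      · have mBs : Bs ∈ pathSet A As Bs Cs C B := by
          unfold pathSet; left; left; left; right; exact left_mem_segment ℝ Bs Cs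
        exact ⟨Bs, mBs, (max_eq_left hle).symm⟩
    · have m1 := le_max_left (Bs 1) (C 1)
      have m2 := le_max_right (Bs 1) (C 1)
      rintro x ⟨p, hp, rfl⟩
      simp only [pathSet, Set.mem_union] at hp
      rcases hp with ((((hp | hp) | hp) | hp) | hp) | hp <;>
        exact seg_coord_le 1 hp (by linarith) (by linarith)
  · refine IsGreatest.csSup_eq ⟨⟨Cs, mCs, rfl⟩, ?_⟩
    rintro x ⟨p, hp, rfl⟩
    simp only [pathSet, Set.mem_union] at hp
    rcases hp with ((((hp | hp) | hp) | hp) | hp) | hp <;>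
      exact seg_coord_le 2 hp (by linarith) (by linarith)
end
end
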